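/- arXiv:0803.2797 — 5 statements merged into one kernel-verified Lean document; each statement's English description precedes it below -/
import Mathlib

section
/- Let n ≥ 1, let Ω ⊆ ℝ^n be a nonempty open convex set, let r ≥ 2 and let B be a real n×n matrix with B^r = 0. (i) If f, g : Ω → ℝ are smooth and ∇f = B·∇g on Ω, then there exist smooth functions V_0, …, V_{r−1} : Ω → ℝ with V_{r−2} = f and V_{r−1} = g such that ∇V_i = B^{r−1−i}·∇g on Ω for every 0 ≤ i ≤ r−2; moreover these functions are unique up to additive constants: if Ṽ_0, …, Ṽ_{r−1} is another tuple with Ṽ_{r−2} = f, Ṽ_{r−1} = g and ∇Ṽ_i = B^{r−1−i}·∇g for all 0 ≤ i ≤ r−2, then each V_i − Ṽ_i is constant on Ω. (ii) Conversely, if smooth functions V_0, …, V_{r−1} : Ω → ℝ satisfy ∇V_i = B^{r−1−i}·∇V_{r−1} for all 0 ≤ i ≤ r−2, then the pair f = V_{r−2}, g = V_{r−1} satisfies ∇f = B·∇g on Ω, and B·∇V_0 = 0 on Ω. -/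
open Metric Set MeasureTheory Matrix

set_option maxHeartbeats 1600000

/-- The gradient of `f : ℝ^d → ℝ` at `x`: the vector of partial derivatives. -/
noncomputable def grad {d : ℕ} (f : (Fin d → ℝ) → ℝ) (x : Fin d → ℝ) : Fin d → ℝ :=
  fun i => fderiv ℝ f x (Pi.single i 1)



noncomputable def dotL {n : ℕ} : (Fin n → ℝ) →L[ℝ] (Fin n → ℝ) →L[ℝ] ℝ :=
  ∑ i : Fin n, (ContinuousLinearMap.proj i).smulRight (ContinuousLinearMap.proj i)

lemma dotL_apply {n : ℕ} (v w : Fin n → ℝ) : dotL v w = ∑ i, v i * w i := by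
  simp [dotL, ContinuousLinearMap.sum_apply, smul_eq_mul, mul_comm]

lemma dotL_comm {n : ℕ} (v w : Fin n → ℝ) : dotL v w = dotL w v := by
  simp [dotL_apply, mul_comm]

lemma dotL_single {n : ℕ} (v : Fin n → ℝ) (i : Fin n) : dotL v (Pi.single i 1) = v i := by
  rw [dotL_apply]
  simp [Pi.single_apply, mul_ite]

lemma pi_single_expand {n : ℕ} (u : Fin n → ℝ) : u = ∑ j, u j • (Pi.single j 1 : Fin n → ℝ) := by
  ext i
  simp [Pi.single_apply, Finset.sum_apply]

lemma clm_pi_apply {n : ℕ} (T : (Fin n → ℝ) →L[ℝ] (Fin n → ℝ)) (u : Fin n → ℝ) (i : Fin n) :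
    T u i = ∑ j, u j * T (Pi.single j 1) i := by
  conv_lhs => rw [pi_single_expand u]
  simp [Finset.sum_apply, smul_eq_mul]

lemma clm_ext_single {n : ℕ} {T S : (Fin n → ℝ) →L[ℝ] ℝ}
    (h : ∀ i, T (Pi.single i 1) = S (Pi.single i 1)) : T = S := by
  ext u
  conv_lhs => rw [pi_single_expand u]
  conv_rhs => rw [pi_single_expand u]
  simp [h]

lemma dot_mulVec_symm {n : ℕ} {A : Matrix (Fin n) (Fin n) ℝ} (hA : Aᵀ = A)
    (u w : Fin n → ℝ) : dotL (A.mulVec u) w = dotL (A.mulVec w) u := by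
  simp only [dotL_apply, Matrix.mulVec, dotProduct]
  simp only [Finset.sum_mul]
  rw [Finset.sum_comm]
  refine Finset.sum_congr rfl fun i _ => Finset.sum_congr rfl fun j _ => ?_
  have h := congrFun (congrFun hA j) i
  simp only [Matrix.transpose_apply] at h
  rw [← h]; ring

lemma nilp_comm {n : ℕ} {B M : Matrix (Fin n) (Fin n) ℝ} (hM : Mᵀ = M)
    (hBM : (B * M)ᵀ = B * M) : ∀ k, B ^ (k+1) * M = M * Bᵀ ^ (k+1) := by
  have h1 : B * M = M * Bᵀ := by
    calc B * M = (B * M)ᵀ := hBM.symm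
    _ = Mᵀ * Bᵀ := Matrix.transpose_mul _ _
    _ = M * Bᵀ := by rw [hM]
  intro k
  induction k with
  | zero => simpa using h1
  | succ k ih =>
    calc B ^ (k+2) * M = B * (B ^ (k+1) * M) := by rw [← mul_assoc, ← pow_succ']
    _ = B * (M * Bᵀ ^ (k+1)) := by rw [ih]
    _ = (B * M) * Bᵀ ^ (k+1) := by rw [mul_assoc]
    _ = M * Bᵀ ^ (k+2) := by rw [h1, mul_assoc, ← pow_succ']

lemma nilp_symm {n : ℕ} {B M : Matrix (Fin n) (Fin n) ℝ} (hM : Mᵀ = M)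
    (hBM : (B * M)ᵀ = B * M) (k : ℕ) : (B ^ (k+1) * M)ᵀ = B ^ (k+1) * M := by
  rw [Matrix.transpose_mul, hM, Matrix.transpose_pow, nilp_comm hM hBM k]

lemma exists_potential {n : ℕ} {Ω : Set (Fin n → ℝ)} (hΩo : IsOpen Ω) (hconv : Convex ℝ Ω)
    {a : Fin n → ℝ} (ha : a ∈ Ω) {F : (Fin n → ℝ) → (Fin n → ℝ)}
    (hF : ContDiffOn ℝ (⊤ : ℕ∞) F Ω)
    (hsym : ∀ x ∈ Ω, ∀ u w, dotL (fderiv ℝ F x u) w = dotL (fderiv ℝ F x w) u) :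
    ∃ V : (Fin n → ℝ) → ℝ, ContDiffOn ℝ (⊤ : ℕ∞) V Ω ∧
      ∀ x ∈ Ω, HasFDerivAt V (dotL (F x)) x := by
  have hFd : ∀ x ∈ Ω, DifferentiableAt ℝ F x := fun x hx =>
    (hF.contDiffAt (hΩo.mem_nhds hx)).differentiableAt (by simp)
  have hFc : ContinuousOn F Ω := hF.continuousOn
  have hF' : ContinuousOn (fderiv ℝ F) Ω := (hF.fderiv_of_isOpen (m := ((⊤:ℕ∞) : WithTop ℕ∞)) hΩo le_rfl).continuousOn
  set c : (Fin n → ℝ) → ℝ → (Fin n → ℝ) := fun x t => a + t • (x - a) with hcdef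
  have hccont : Continuous fun p : (Fin n → ℝ) × ℝ => c p.1 p.2 := by fun_prop
  have hmem : ∀ x ∈ Ω, ∀ t ∈ Icc (0:ℝ) 1, c x t ∈ Ω := by
    intro x hx t ht
    have h : c x t = (1 - t) • a + t • x := by
      simp only [hcdef, smul_sub]
      module
    rw [h]
    exact hconv ha hx (by linarith [ht.2]) ht.1 (by ring)
  set Φ' : (Fin n → ℝ) → ℝ → (Fin n → ℝ) →L[ℝ] ℝ := fun x t =>
    t • ((dotL (x - a)).comp (fderiv ℝ F (c x t))) + dotL (F (c x t)) with hΦ'def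
  set V : (Fin n → ℝ) → ℝ := fun x => ∫ t in (0:ℝ)..1, dotL (F (c x t)) (x - a) with hVdef
  have hΙ : Set.uIoc (0:ℝ) 1 = Ioc 0 1 := uIoc_of_le zero_le_one
  have hu : uIcc (0:ℝ) 1 = Icc 0 1 := uIcc_of_le zero_le_one
  have key : ∀ x₀ ∈ Ω, HasFDerivAt V (dotL (F x₀)) x₀ := by
    intro x₀ hx₀
    obtain ⟨ε, εpos, hball⟩ : ∃ ε > 0, closedBall x₀ ε ⊆ Ω :=
      nhds_basis_closedBall.mem_iff.1 (hΩo.mem_nhds hx₀)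
    have hmapsTo : MapsTo (fun p : (Fin n → ℝ) × ℝ => c p.1 p.2)
        (closedBall x₀ ε ×ˢ Icc (0:ℝ) 1) Ω := fun p hp => hmem _ (hball hp.1) _ hp.2
    have hcontD : ContinuousOn (fun p : (Fin n → ℝ) × ℝ => fderiv ℝ F (c p.1 p.2))
        (closedBall x₀ ε ×ˢ Icc (0:ℝ) 1) := hF'.comp hccont.continuousOn hmapsTo
    have hcontF : ContinuousOn (fun p : (Fin n → ℝ) × ℝ => F (c p.1 p.2))
        (closedBall x₀ ε ×ˢ Icc (0:ℝ) 1) := hFc.comp hccont.continuousOn hmapsTo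
    have hcontΦ' : ContinuousOn (fun p : (Fin n → ℝ) × ℝ => Φ' p.1 p.2)
        (closedBall x₀ ε ×ˢ Icc (0:ℝ) 1) := by
      apply ContinuousOn.add
      · exact continuous_snd.continuousOn.smul
          (ContinuousOn.clm_comp
            ((dotL.continuous.comp (continuous_fst.sub continuous_const)).continuousOn) hcontD)
      · exact dotL.continuous.comp_continuousOn hcontF
    obtain ⟨C, hC⟩ :=
      ((isCompact_closedBall x₀ ε).prod isCompact_Icc).exists_bound_of_continuousOn hcontΦ'
    have hΦ'x₀ : ContinuousOn (fun t => Φ' x₀ t) (Icc (0:ℝ) 1) :=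
      hcontΦ'.comp (Continuous.continuousOn (by fun_prop))
        (fun t ht => Set.mk_mem_prod (mem_closedBall_self εpos.le) ht)
    have hdiff_t : ∀ x ∈ closedBall x₀ ε,
        ContinuousOn (fun t => dotL (F (c x t)) (x - a)) (Icc (0:ℝ) 1) := by
      intro x hx
      have h1 : ContinuousOn (fun t => F (c x t)) (Icc (0:ℝ) 1) :=
        hFc.comp (by fun_prop) (fun t ht => hmem x (hball hx) t ht)
      exact (dotL.continuous.comp_continuousOn h1).clm_apply continuousOn_const
    have hmeas : ∀ᶠ x in nhds x₀, AEStronglyMeasurable (fun t => dotL (F (c x t)) (x - a))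
        (volume.restrict (Set.uIoc (0:ℝ) 1)) := by
      filter_upwards [closedBall_mem_nhds x₀ εpos] with x hx
      exact ((hdiff_t x hx).mono (by rw [hΙ]; exact Ioc_subset_Icc_self)).aestronglyMeasurable
        measurableSet_uIoc
    have hint0 : IntervalIntegrable (fun t => dotL (F (c x₀ t)) (x₀ - a)) volume 0 1 :=
      ((hdiff_t x₀ (mem_closedBall_self εpos.le)).mono hu.subset).intervalIntegrable
    have hmeas' : AEStronglyMeasurable (fun t => Φ' x₀ t) (volume.restrict (Set.uIoc (0:ℝ) 1)) :=
      (hΦ'x₀.mono (by rw [hΙ]; exact Ioc_subset_Icc_self)).aestronglyMeasurable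
        measurableSet_uIoc
    have hbd : ∀ᵐ t ∂(volume : Measure ℝ), t ∈ Set.uIoc (0:ℝ) 1 → ∀ x ∈ ball x₀ ε,
        ‖Φ' x t‖ ≤ C :=
      ae_of_all _ fun t ht x hx =>
        hC (x, t) (Set.mk_mem_prod (ball_subset_closedBall hx)
          (Ioc_subset_Icc_self (hΙ ▸ ht)))
    have hdf : ∀ᵐ t ∂(volume : Measure ℝ), t ∈ Set.uIoc (0:ℝ) 1 → ∀ x ∈ ball x₀ ε,
        HasFDerivAt (fun x => dotL (F (c x t)) (x - a)) (Φ' x t) x := by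
      refine ae_of_all _ fun t ht x hx => ?_
      have htI : t ∈ Icc (0:ℝ) 1 := Ioc_subset_Icc_self (hΙ ▸ ht)
      have hxΩ : x ∈ Ω := hball (ball_subset_closedBall hx)
      have hct : c x t ∈ Ω := hmem x hxΩ t htI
      have h1 : HasFDerivAt (fun y => c y t) (t • ContinuousLinearMap.id ℝ (Fin n → ℝ)) x := by
        have h0 : HasFDerivAt (fun y : Fin n → ℝ => a + t • (y - a))
            (t • ContinuousLinearMap.id ℝ (Fin n → ℝ)) x :=
          (((hasFDerivAt_id x).sub_const a).const_smul t).const_add a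
        simpa [hcdef] using h0
      have h3 : HasFDerivAt (fun y => F (c y t))
          ((fderiv ℝ F (c x t)).comp (t • ContinuousLinearMap.id ℝ (Fin n → ℝ))) x :=
        (hFd _ hct).hasFDerivAt.comp x h1
      have h4 := dotL.hasFDerivAt.comp x h3
      have h5 : HasFDerivAt (fun y : Fin n → ℝ => y - a)
          (ContinuousLinearMap.id ℝ (Fin n → ℝ)) x := (hasFDerivAt_id x).sub_const a
      have h6 := h4.clm_apply h5
      refine h6.congr_fderiv (Eq.symm ?_)
      refine ContinuousLinearMap.ext fun v => ?_
      simp only [hΦ'def, Function.comp_apply, ContinuousLinearMap.add_apply,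
        ContinuousLinearMap.comp_apply, ContinuousLinearMap.flip_apply,
        ContinuousLinearMap.smul_apply, ContinuousLinearMap.coe_id', id_eq,
        ContinuousLinearMap.map_smul, smul_eq_mul]
      rw [dotL_comm (x - a)]
      ring
    have main := intervalIntegral.hasFDerivAt_integral_of_dominated_of_fderiv_le
      (F := fun x t => dotL (F (c x t)) (x - a)) (F' := Φ') (x₀ := x₀) (a := 0) (b := 1)
      (bound := fun _ => C) (μ := volume) (ball_mem_nhds x₀ εpos) hmeas hint0 hmeas' hbd
      intervalIntegrable_const hdf
    have hceq : (∫ t in (0:ℝ)..1, Φ' x₀ t) = dotL (F x₀) := by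
      have hint' : IntervalIntegrable (fun t => Φ' x₀ t) volume 0 1 :=
        (hΦ'x₀.mono hu.subset).intervalIntegrable
      refine ContinuousLinearMap.ext fun v => ?_
      rw [ContinuousLinearMap.intervalIntegral_apply hint' v]
      have hψ : ∀ t ∈ uIcc (0:ℝ) 1,
          HasDerivAt (fun s => s * dotL (F (c x₀ s)) v) (Φ' x₀ t v) t := by
        intro t ht
        rw [hu] at ht
        have hct : c x₀ t ∈ Ω := hmem x₀ hx₀ t ht
        have hcurve : HasDerivAt (fun s => c x₀ s) (x₀ - a) t := by
          have h0 : HasDerivAt (fun s : ℝ => a + s • (x₀ - a)) ((1:ℝ) • (x₀ - a)) t :=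
            ((hasDerivAt_id t).smul_const (x₀ - a)).const_add a
          simpa [hcdef] using h0
        have hFcurve : HasDerivAt (fun s => F (c x₀ s)) (fderiv ℝ F (c x₀ t) (x₀ - a)) t :=
          (hFd _ hct).hasFDerivAt.comp_hasDerivAt t hcurve
        have hq : HasDerivAt (fun s => dotL (F (c x₀ s)) v)
            (dotL (fderiv ℝ F (c x₀ t) (x₀ - a)) v) t := by
          exact (dotL.flip v).hasFDerivAt.comp_hasDerivAt t hFcurve
        have hm := (hasDerivAt_id t).mul hq
        refine hm.congr_deriv (Eq.symm ?_)
        simp only [hΦ'def, ContinuousLinearMap.add_apply, ContinuousLinearMap.comp_apply,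
          ContinuousLinearMap.smul_apply, smul_eq_mul, id_eq, one_mul]
        rw [hsym _ hct, dotL_comm]
        ring
      have hicont : IntervalIntegrable (fun t => Φ' x₀ t v) volume 0 1 :=
        ((hΦ'x₀.clm_apply continuousOn_const).mono hu.subset).intervalIntegrable
      rw [intervalIntegral.integral_eq_sub_of_hasDerivAt hψ hicont]
      simp [hcdef]
    rw [hceq] at main
    exact main
  refine ⟨V, ?_, key⟩
  rw [contDiffOn_infty_iff_fderiv_of_isOpen hΩo]
  refine ⟨fun x hx => (key x hx).differentiableAt.differentiableWithinAt, ?_⟩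
  exact (dotL.contDiff.comp_contDiffOn hF).congr fun x hx => (key x hx).fderiv






noncomputable def mvL {n : ℕ} (B : Matrix (Fin n) (Fin n) ℝ) :
    (Fin n → ℝ) →L[ℝ] (Fin n → ℝ) :=
  LinearMap.toContinuousLinearMap B.mulVecLin

lemma mvL_apply {n : ℕ} (B : Matrix (Fin n) (Fin n) ℝ) (v : Fin n → ℝ) :
    mvL B v = B.mulVec v := rfl

lemma pi_single_expand' {n : ℕ} (u : Fin n → ℝ) :
    u = ∑ j, u j • (Pi.single j 1 : Fin n → ℝ) := by
  ext i
  simp [Pi.single_apply, Finset.sum_apply]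

lemma clm_pi_apply' {n : ℕ} (T : (Fin n → ℝ) →L[ℝ] (Fin n → ℝ)) (u : Fin n → ℝ) (i : Fin n) :
    T u i = ∑ j, u j * T (Pi.single j 1) i := by
  conv_lhs => rw [pi_single_expand' u]
  simp [Finset.sum_apply, smul_eq_mul]

noncomputable def hess {n : ℕ} (g : (Fin n → ℝ) → ℝ) (x : Fin n → ℝ) :
    Matrix (Fin n) (Fin n) ℝ :=
  fun i j => fderiv ℝ (grad g) x (Pi.single j 1) i

lemma fderiv_grad_eq {n : ℕ} {g : (Fin n → ℝ) → ℝ} {x : Fin n → ℝ} (u : Fin n → ℝ) :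
    fderiv ℝ (grad g) x u = (hess g x).mulVec u := by
  funext i
  rw [clm_pi_apply' (fderiv ℝ (grad g) x) u i]
  simp only [Matrix.mulVec, dotProduct, hess]
  exact Finset.sum_congr rfl fun j _ => mul_comm _ _

lemma grad_contDiffOn {n : ℕ} {Ω : Set (Fin n → ℝ)} (hΩo : IsOpen Ω)
    {g : (Fin n → ℝ) → ℝ} (hg : ContDiffOn ℝ (⊤ : ℕ∞) g Ω) :
    ContDiffOn ℝ (⊤ : ℕ∞) (grad g) Ω := by
  have h1 : ContDiffOn ℝ ((⊤:ℕ∞) : WithTop ℕ∞) (fderiv ℝ g) Ω :=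
    hg.fderiv_of_isOpen (m := ((⊤:ℕ∞) : WithTop ℕ∞)) hΩo le_rfl
  apply contDiffOn_pi.2
  intro i
  exact (ContinuousLinearMap.apply ℝ ℝ (Pi.single i 1)).contDiff.comp_contDiffOn h1

lemma grad_differentiableAt {n : ℕ} {Ω : Set (Fin n → ℝ)} (hΩo : IsOpen Ω)
    {g : (Fin n → ℝ) → ℝ} (hg : ContDiffOn ℝ (⊤ : ℕ∞) g Ω) {x : Fin n → ℝ} (hx : x ∈ Ω) :
    DifferentiableAt ℝ (grad g) x :=
  ((grad_contDiffOn hΩo hg).contDiffAt (hΩo.mem_nhds hx)).differentiableAt (by simp)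

lemma hess_symm {n : ℕ} {Ω : Set (Fin n → ℝ)} (hΩo : IsOpen Ω)
    {g : (Fin n → ℝ) → ℝ} (hg : ContDiffOn ℝ (⊤ : ℕ∞) g Ω) {x : Fin n → ℝ} (hx : x ∈ Ω) :
    (hess g x)ᵀ = hess g x := by
  have hdiff : DifferentiableAt ℝ (fderiv ℝ g) x :=
    ((hg.fderiv_of_isOpen (m := ((⊤:ℕ∞) : WithTop ℕ∞)) hΩo le_rfl).contDiffAt
      (hΩo.mem_nhds hx)).differentiableAt (by simp)
  have hev : ∀ᶠ y in nhds x, HasFDerivAt g (fderiv ℝ g y) y := by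
    filter_upwards [hΩo.mem_nhds hx] with y hy
    exact ((hg.contDiffAt (hΩo.mem_nhds hy)).differentiableAt (by simp)).hasFDerivAt
  have hsymm := second_derivative_symmetric_of_eventually hev hdiff.hasFDerivAt
  set P : ((Fin n → ℝ) →L[ℝ] ℝ) →L[ℝ] (Fin n → ℝ) :=
    ContinuousLinearMap.pi (fun i : Fin n => ContinuousLinearMap.apply ℝ ℝ (Pi.single i 1))
    with hP
  have hgr : grad g = fun y => P (fderiv ℝ g y) := rfl
  have hcomp : HasFDerivAt (grad g) (P.comp (fderiv ℝ (fderiv ℝ g) x)) x := by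
    rw [hgr]
    exact P.hasFDerivAt.comp x hdiff.hasFDerivAt
  have hfd : fderiv ℝ (grad g) x = P.comp (fderiv ℝ (fderiv ℝ g) x) := hcomp.fderiv
  funext i j
  simp only [Matrix.transpose_apply, hess, hfd, ContinuousLinearMap.comp_apply, hP,
    ContinuousLinearMap.pi_apply, ContinuousLinearMap.apply_apply]
  exact hsymm _ _

lemma hess_rel {n : ℕ} {Ω : Set (Fin n → ℝ)} (hΩo : IsOpen Ω)
    {f g : (Fin n → ℝ) → ℝ} (hg : ContDiffOn ℝ (⊤ : ℕ∞) g Ω)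
    {B : Matrix (Fin n) (Fin n) ℝ}
    (hfg : ∀ x ∈ Ω, grad f x = B.mulVec (grad g x)) {x : Fin n → ℝ} (hx : x ∈ Ω) :
    hess f x = B * hess g x := by
  have heq : grad f =ᶠ[nhds x] fun y => (mvL B) (grad g y) := by
    filter_upwards [hΩo.mem_nhds hx] with y hy
    rw [hfg y hy, mvL_apply]
  have hcomp : HasFDerivAt (fun y => (mvL B) (grad g y))
      ((mvL B).comp (fderiv ℝ (grad g) x)) x :=
    (mvL B).hasFDerivAt.comp x (grad_differentiableAt hΩo hg hx).hasFDerivAt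
  have hfd : fderiv ℝ (grad f) x = (mvL B).comp (fderiv ℝ (grad g) x) := by
    rw [heq.fderiv_eq]
    exact hcomp.fderiv
  funext i j
  simp only [hess, hfd, ContinuousLinearMap.comp_apply, mvL_apply]
  rw [fderiv_grad_eq]
  rw [Matrix.mulVec_mulVec]
  simp [Matrix.mulVec_single]



/-- Extension of `∇f = B∇g` (`B` nilpotent, `B^r = 0`) to the μ-dependent system
`(−B + μI)∇V_μ ≡ 0 (mod μ^r)`:
(i) any smooth solution `(f, g)` on a nonempty open convex `Ω` extends to smooth
`V_0, …, V_{r−1}` with `V_{r−2} = f`, `V_{r−1} = g` and `∇V_i = B^{r−1−i}∇g`,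
uniquely up to additive constants; (ii) conversely any such tuple yields a
solution of `∇f = B∇g`, and moreover `B∇V_0 = 0`. -/
theorem stmt_4 (n : ℕ) (hn : 1 ≤ n) (Ω : Set (Fin n → ℝ)) (hΩo : IsOpen Ω)
    (hconv : Convex ℝ Ω) (hne : Ω.Nonempty) (r : ℕ) (hr : 2 ≤ r)
    (B : Matrix (Fin n) (Fin n) ℝ) (hB : B ^ r = 0) :
    (∀ f g : (Fin n → ℝ) → ℝ, ContDiffOn ℝ (⊤ : ℕ∞) f Ω → ContDiffOn ℝ (⊤ : ℕ∞) g Ω →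
      (∀ x ∈ Ω, grad f x = B.mulVec (grad g x)) →
      (∃ V : ℕ → ((Fin n → ℝ) → ℝ), V (r - 2) = f ∧ V (r - 1) = g ∧
          (∀ i ≤ r - 1, ContDiffOn ℝ (⊤ : ℕ∞) (V i) Ω) ∧
          (∀ i ≤ r - 2, ∀ x ∈ Ω, grad (V i) x = (B ^ (r - 1 - i)).mulVec (grad g x))) ∧
      (∀ V W : ℕ → ((Fin n → ℝ) → ℝ),
        (∀ i ≤ r - 1, ContDiffOn ℝ (⊤ : ℕ∞) (V i) Ω) →
        (∀ i ≤ r - 1, ContDiffOn ℝ (⊤ : ℕ∞) (W i) Ω) →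
        V (r - 2) = f → V (r - 1) = g → W (r - 2) = f → W (r - 1) = g →
        (∀ i ≤ r - 2, ∀ x ∈ Ω, grad (V i) x = (B ^ (r - 1 - i)).mulVec (grad g x)) →
        (∀ i ≤ r - 2, ∀ x ∈ Ω, grad (W i) x = (B ^ (r - 1 - i)).mulVec (grad g x)) →
        ∀ i ≤ r - 1, ∃ c : ℝ, ∀ x ∈ Ω, V i x - W i x = c)) ∧
    (∀ V : ℕ → ((Fin n → ℝ) → ℝ),
      (∀ i ≤ r - 1, ContDiffOn ℝ (⊤ : ℕ∞) (V i) Ω) →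
      (∀ i ≤ r - 2, ∀ x ∈ Ω, grad (V i) x = (B ^ (r - 1 - i)).mulVec (grad (V (r - 1)) x)) →
      (∀ x ∈ Ω, grad (V (r - 2)) x = B.mulVec (grad (V (r - 1)) x)) ∧
      (∀ x ∈ Ω, B.mulVec (grad (V 0) x) = 0)) := by
  obtain ⟨a, ha⟩ := hne
  refine ⟨fun f g hf hg hfg => ?_, fun V hVsm hVgr => ?_⟩
  · have hsymk : ∀ k : ℕ, ∀ x ∈ Ω, ∀ u w,
        dotL (fderiv ℝ (fun y => (B^(k+1)).mulVec (grad g y)) x u) w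
          = dotL (fderiv ℝ (fun y => (B^(k+1)).mulVec (grad g y)) x w) u := by
      intro k x hx u w
      have hfd : fderiv ℝ (fun y => (B^(k+1)).mulVec (grad g y)) x
          = (mvL (B^(k+1))).comp (fderiv ℝ (grad g) x) := by
        have h0 : (fun y => (B^(k+1)).mulVec (grad g y))
            = fun y => (mvL (B^(k+1))) (grad g y) := rfl
        rw [h0]
        exact ((mvL _).hasFDerivAt.comp x
          (grad_differentiableAt hΩo hg hx).hasFDerivAt).fderiv
      have hS : (B^(k+1) * hess g x)ᵀ = B^(k+1) * hess g x :=
        nilp_symm (hess_symm hΩo hg hx)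
          (by rw [← hess_rel hΩo hg hfg hx]; exact hess_symm hΩo hf hx) k
      rw [hfd]
      simp only [ContinuousLinearMap.comp_apply, mvL_apply, fderiv_grad_eq,
        Matrix.mulVec_mulVec]
      exact dot_mulVec_symm hS u w
    have hFk_smooth : ∀ k : ℕ,
        ContDiffOn ℝ (⊤:ℕ∞) (fun y => (B^(k+1)).mulVec (grad g y)) Ω := fun k =>
      (mvL (B^(k+1))).contDiff.comp_contDiffOn (grad_contDiffOn hΩo hg)
    have hU : ∀ k : ℕ, ∃ U : (Fin n → ℝ) → ℝ, ContDiffOn ℝ (⊤:ℕ∞) U Ω ∧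
        ∀ x ∈ Ω, HasFDerivAt U (dotL ((B^(k+1)).mulVec (grad g x))) x :=
      fun k => exists_potential hΩo hconv ha (hFk_smooth k) (hsymk k)
    choose U hUsm hUd using hU
    constructor
    · refine ⟨fun i => if i = r-1 then g else if i = r-2 then f else U (r-2-i),
        ?_, ?_, ?_, ?_⟩
      · simp [show ¬(r-2 = r-1) by omega]
      · simp
      · intro i hi
        by_cases h1 : i = r-1
        · simpa [h1] using hg
        by_cases h2 : i = r-2
        · simpa [h1, h2, show ¬(r-2 = r-1) by omega] using hf
        simp only [if_neg h1, if_neg h2]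
        exact hUsm _
      · intro i hi x hx
        by_cases h2 : i = r-2
        · subst h2
          simp only [if_neg (show ¬(r-2 = r-1) by omega), if_pos rfl]
          rw [show r-1-(r-2) = 1 by omega, pow_one]
          exact hfg x hx
        · have h1 : i ≠ r-1 := by omega
          simp only [if_neg h1, if_neg h2]
          have hgr : grad (U (r-2-i)) x = (B^(r-2-i+1)).mulVec (grad g x) := by
            funext j
            simp only [grad, (hUd (r-2-i) x hx).fderiv, dotL_single]
          rw [show r-1-i = r-2-i+1 by omega]
          exact hgr
    · intro V W hVsm' hWsm' hV2 hV1 hW2 hW1 hVgr' hWgr' i hi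
      by_cases h1 : i = r-1
      · exact ⟨0, fun x hx => by rw [h1, hV1, hW1]; ring⟩
      · have hi2 : i ≤ r-2 := by omega
        have hfd0 : ∀ x ∈ Ω, HasFDerivWithinAt (fun y => V i y - W i y)
            (0 : (Fin n → ℝ) →L[ℝ] ℝ) Ω x := by
          intro x hx
          have hVd : DifferentiableAt ℝ (V i) x :=
            ((hVsm' i (by omega)).contDiffAt (hΩo.mem_nhds hx)).differentiableAt
              (by simp)
          have hWd : DifferentiableAt ℝ (W i) x :=
            ((hWsm' i (by omega)).contDiffAt (hΩo.mem_nhds hx)).differentiableAt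
              (by simp)
          have heq : fderiv ℝ (V i) x = fderiv ℝ (W i) x := by
            apply clm_ext_single
            intro j
            have e1 := congrFun (hVgr' i hi2 x hx) j
            have e2 := congrFun (hWgr' i hi2 x hx) j
            simpa [grad] using e1.trans e2.symm
          have hsub := hVd.hasFDerivAt.sub hWd.hasFDerivAt
          rw [heq, sub_self] at hsub
          exact hsub.hasFDerivWithinAt
        refine ⟨V i a - W i a, fun x hx => ?_⟩
        have hb := Convex.norm_image_sub_le_of_norm_hasFDerivWithin_le
          (f := fun y => V i y - W i y) (f' := fun _ => (0 : (Fin n → ℝ) →L[ℝ] ℝ))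
          (C := 0) hfd0 (fun y _ => by simp) hconv ha hx
        rw [zero_mul] at hb
        have := norm_le_zero_iff.1 hb
        have h0 : V i x - W i x - (V i a - W i a) = 0 := by
          have := sub_eq_zero.1 (by simpa using this)
          linarith [this]
        linarith [h0]
  · refine ⟨fun x hx => ?_, fun x hx => ?_⟩
    · have h := hVgr (r-2) le_rfl x hx
      rwa [show r-1-(r-2) = 1 by omega, pow_one] at h
    · have h0 := hVgr 0 (by omega) x hx
      rw [h0, Nat.sub_zero, Matrix.mulVec_mulVec]
      have hpow : B * B^(r-1) = B^r := by
        conv_rhs => rw [show r = 1 + (r-1) by omega]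
        rw [pow_add, pow_one]
      rw [hpow, hB, Matrix.zero_mulVec]
end

section
/- Let n ≥ 1, let Ω ⊆ ℝ^n be a nonempty open convex set, let B be a real n×n matrix and let f : Ω → ℝ be smooth. Suppose that for all x ∈ Ω and all 1 ≤ i, j ≤ n we have ∂_i((B∇f)_j)(x) = ∂_j((B∇f)_i)(x), where (B∇f)_j denotes the j-th component of the map x ↦ B·∇f(x). Then for every k ∈ ℕ, all x ∈ Ω and all 1 ≤ i, j ≤ n: ∂_i((B^k∇f)_j)(x) = ∂_j((B^k∇f)_i)(x). -/
open Matrix in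
/-- If `B df` is a closed 1-form (the mixed partials of `B∇f` are symmetric) on a
nonempty open convex set `Ω`, then `B^k df` is closed for every `k ∈ ℕ`. -/
theorem stmt_7 (n : ℕ) (hn : 1 ≤ n) (Ω : Set (Fin n → ℝ)) (hΩo : IsOpen Ω)
    (hconv : Convex ℝ Ω) (hne : Ω.Nonempty)
    (B : Matrix (Fin n) (Fin n) ℝ) (f : (Fin n → ℝ) → ℝ)
    (hf : ContDiffOn ℝ (⊤ : ℕ∞) f Ω)
    (hclosed : ∀ x ∈ Ω, ∀ i j : Fin n,
      fderiv ℝ (fun y => B.mulVec (grad f y) j) x (Pi.single i 1)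
        = fderiv ℝ (fun y => B.mulVec (grad f y) i) x (Pi.single j 1)) :
    ∀ k : ℕ, ∀ x ∈ Ω, ∀ i j : Fin n,
      fderiv ℝ (fun y => (B ^ k).mulVec (grad f y) j) x (Pi.single i 1)
        = fderiv ℝ (fun y => (B ^ k).mulVec (grad f y) i) x (Pi.single j 1) := by
  intro k x hx i j
  have hΩx : Ω ∈ nhds x := hΩo.mem_nhds hx
  have hfx : ContDiffAt ℝ (⊤ : ℕ∞) f x := hf.contDiffAt hΩx
  have hφ : ContDiffAt ℝ (⊤ : ℕ∞) (fderiv ℝ f) x := hfx.fderiv_right (by exact_mod_cast le_top)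
  have hφd : DifferentiableAt ℝ (fderiv ℝ f) x := hφ.differentiableAt (by simp)
  set f'' := fderiv ℝ (fderiv ℝ f) x with hf''
  -- derivative of each component of grad
  have hder : ∀ l : Fin n, HasFDerivAt (fun y => grad f y l)
      ((ContinuousLinearMap.apply ℝ ℝ (Pi.single l (1:ℝ))).comp f'') x := by
    intro l
    exact (ContinuousLinearMap.apply ℝ ℝ (Pi.single l (1:ℝ))).hasFDerivAt.comp x
      hφd.hasFDerivAt
  -- the Hessian matrix at x
  set H : Matrix (Fin n) (Fin n) ℝ :=
    Matrix.of (fun i j => f'' (Pi.single i 1) (Pi.single j 1)) with hHdef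
  -- Clairaut: H is symmetric
  have hsymm : Hᵀ = H := by
    ext a b
    have := (hfx.of_le (WithTop.coe_le_coe.mpr (le_top : (2:ℕ∞) ≤ ⊤))).isSymmSndFDerivAt
      (n := (2 : WithTop ℕ∞)) (by simp) (Pi.single a 1) (Pi.single b 1)
    simpa [hHdef, Matrix.transpose_apply] using this.symm
  -- key computation: derivative of components of M.mulVec (grad f ·)
  have key : ∀ (M : Matrix (Fin n) (Fin n) ℝ) (a b : Fin n),
      fderiv ℝ (fun y => M.mulVec (grad f y) b) x (Pi.single a 1)
        = (H * Mᵀ) a b := by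
    intro M a b
    have h1 : HasFDerivAt (fun y => M.mulVec (grad f y) b)
        (∑ l, M b l • ((ContinuousLinearMap.apply ℝ ℝ (Pi.single l (1:ℝ))).comp f'')) x := by
      have : ∀ y, M.mulVec (grad f y) b = ∑ l, M b l * grad f y l := by
        intro y; simp [Matrix.mulVec, dotProduct]
      simp only [this]
      exact HasFDerivAt.fun_sum fun l _ => (hder l).const_mul (M b l)
    rw [h1.fderiv]
    simp [Matrix.mul_apply, hHdef, mul_comm, Matrix.transpose_apply,
      ContinuousLinearMap.sum_apply]
  -- hypothesis in matrix form: H * Bᵀ = B * H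
  have hHB : H * Bᵀ = B * H := by
    ext a b
    have := hclosed x hx a b
    rw [key B a b, key B b a] at this
    calc (H * Bᵀ) a b = (H * Bᵀ) b a := by
          rw [this]
      _ = (B * H) a b := by
          conv_rhs => rw [← hsymm]
          simp [Matrix.mul_apply, Matrix.transpose_apply, mul_comm]
  -- induction: H * (Bᵀ)^k = B^k * H
  have hpow : ∀ m : ℕ, H * (Bᵀ) ^ m = B ^ m * H := by
    intro m
    induction m with
    | zero => simp
    | succ m ih =>
        calc H * Bᵀ ^ (m + 1) = (H * Bᵀ) * Bᵀ ^ m := by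
              rw [pow_succ', Matrix.mul_assoc]
          _ = B * (H * Bᵀ ^ m) := by rw [hHB, Matrix.mul_assoc]
          _ = B ^ (m + 1) * H := by rw [ih, pow_succ', Matrix.mul_assoc]
  -- symmetry of H * (Bᵀ)^k
  have hfinal : (H * (Bᵀ) ^ k)ᵀ = H * (Bᵀ) ^ k := by
    rw [Matrix.transpose_mul, Matrix.transpose_pow, Matrix.transpose_transpose, hsymm,
      ← hpow]
  rw [key (B ^ k) i j, key (B ^ k) j i, Matrix.transpose_pow]
  exact congrFun (congrFun hfinal.symm i) j
end

section
/- Let R be a commutative ring, r ≥ 1, and let n_1 ≥ n_2 ≥ ⋯ ≥ n_r ≥ 0 be integers. Let p_1, …, p_r ∈ R[μ] be polynomials with deg p_s ≤ n_s, and let i_1, …, i_r ∈ ℕ. Define q_r := p_r^{i_r} mod μ^{n_r+1}, and recursively for s = r−1 down to 1: q_s := ( p_s^{i_s} · μ^{n_s − n_{s+1}} · q_{s+1} ) mod μ^{n_s+1}, where 'mod μ^d' denotes truncation of a polynomial to degree < d. Then q_1 = μ^{n_1 − n_r} · ( (∏_{s=1}^r p_s^{i_s}) mod μ^{n_r+1}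 ). In particular, for 0 ≤ j ≤ n_r the coefficient of μ^{n_1−n_r+j} in q_1 equals the coefficient of μ^j in ∏_{s=1}^r p_s^{i_s}, and all other coefficients of q_1 vanish. -/
open Polynomial

lemma coeff_mod_X_pow {R : Type*} [CommRing R] (P : Polynomial R) (d j : ℕ) :
    (P %ₘ X ^ d).coeff j = if j < d then P.coeff j else 0 := by
  rcases subsingleton_or_nontrivial R with h | h
  · simp [Subsingleton.elim (P %ₘ X ^ d) 0, Subsingleton.elim P 0]
  · have hm : (X ^ d : Polynomial R).Monic := monic_X_pow d
    have hlt : (P %ₘ X ^ d).degree < d := by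
      simpa [degree_X_pow] using degree_modByMonic_lt P hm
    have key := modByMonic_add_div P (X ^ d)
    by_cases hj : j < d
    · have := congrArg (fun Q => Q.coeff j) key
      simp only [coeff_add] at this
      rw [if_pos hj, ← this, coeff_X_pow_mul']
      simp [Nat.not_le.mpr hj]
    · rw [if_neg hj]
      exact coeff_eq_zero_of_degree_lt (lt_of_lt_of_le hlt
        (by exact_mod_cast Nat.le_of_not_lt hj))

lemma mul_mod_coeff {R : Type*} [CommRing R] (A Q : Polynomial R) (m k : ℕ) (hk : k < m) :
    (A * (Q %ₘ X ^ m)).coeff k = (A * Q).coeff k := by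
  rw [coeff_mul, coeff_mul]
  apply Finset.sum_congr rfl
  intro x hx
  rw [Finset.HasAntidiagonal.mem_antidiagonal] at hx
  rw [coeff_mod_X_pow, if_pos (lt_of_le_of_lt (hx ▸ Nat.le_add_left _ _) hk)]

lemma key_step {R : Type*} [CommRing R] (A Q : Polynomial R) (e m : ℕ) (_hm : 0 < m) :
    (A * X ^ e * (Q %ₘ X ^ m)) %ₘ X ^ (e + m) = X ^ e * ((A * Q) %ₘ X ^ m) := by
  ext j
  rw [coeff_mod_X_pow]
  have h1 : A * X ^ e * (Q %ₘ X ^ m) = (A * (Q %ₘ X ^ m)) * X ^ e := by ring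
  rw [h1, coeff_mul_X_pow', coeff_X_pow_mul' (p := (A * Q) %ₘ X ^ m), coeff_mod_X_pow]
  by_cases hle : e ≤ j
  · by_cases hj : j < e + m
    · have : j - e < m := by omega
      rw [if_pos hj, if_pos hle, if_pos hle, if_pos this, mul_mod_coeff _ _ _ _ this]
    · rw [if_neg hj, if_pos hle, if_neg (show ¬ j - e < m by omega)]
  · rw [if_neg hle, if_neg hle]
    split <;> rfl

/-- Structure lemma for the iterated embedded *-powers: if
`q_r = p_r^{i_r} mod μ^{n_r+1}` and
`q_s = (p_s^{i_s} · μ^{n_s−n_{s+1}} · q_{s+1}) mod μ^{n_s+1}` for `1 ≤ s < r`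
(`n_1 ≥ ⋯ ≥ n_r`, `deg p_s ≤ n_s`), then
`q_1 = μ^{n_1−n_r} · ((∏_{s=1}^r p_s^{i_s}) mod μ^{n_r+1})`; in particular the
coefficient of `μ^{n_1−n_r+j}` in `q_1` is the coefficient of `μ^j` in the full
product for `0 ≤ j ≤ n_r`, and all other coefficients of `q_1` vanish. -/
theorem stmt_9 (R : Type*) [CommRing R] (r : ℕ) (hr : 1 ≤ r) (n : ℕ → ℕ)
    (hmono : ∀ s, 1 ≤ s → s < r → n (s + 1) ≤ n s)
    (p : ℕ → Polynomial R) (hdeg : ∀ s, 1 ≤ s → s ≤ r → (p s).degree ≤ (n s : ℕ))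
    (i : ℕ → ℕ) (q : ℕ → Polynomial R)
    (hqr : q r = (p r ^ i r) %ₘ (X ^ (n r + 1)))
    (hq : ∀ s, 1 ≤ s → s < r →
      q s = ((p s ^ i s) * X ^ (n s - n (s + 1)) * q (s + 1)) %ₘ (X ^ (n s + 1))) :
    q 1 = X ^ (n 1 - n r) * ((∏ s ∈ Finset.Icc 1 r, p s ^ i s) %ₘ (X ^ (n r + 1))) ∧
    (∀ j ≤ n r,
      (q 1).coeff (n 1 - n r + j) = (∏ s ∈ Finset.Icc 1 r, p s ^ i s).coeff j) ∧
    (∀ t : ℕ, (t < n 1 - n r ∨ n 1 < t) → (q 1).coeff t = 0) := by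
  have hnr : ∀ k s, 1 ≤ s → s + k = r → n r ≤ n s := by
    intro k
    induction k with
    | zero =>
      intro s _ h
      obtain rfl : s = r := by omega
      exact le_rfl
    | succ k ih =>
      intro s hs1 h
      have h1 := hmono s hs1 (by omega)
      have h2 := ih (s + 1) (by omega) (by omega)
      omega
  have main : ∀ k s, 1 ≤ s → s + k = r →
      q s = X ^ (n s - n r) * ((∏ t ∈ Finset.Icc s r, p t ^ i t) %ₘ X ^ (n r + 1)) := by
    intro k
    induction k with
    | zero =>
      intro s hs1 hsr
      have hs : s = r := by omega
      subst hs
      simp [hqr, Finset.Icc_self]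
    | succ k ih =>
      intro s hs1 hsr
      have hlt : s < r := by omega
      have hih := ih (s + 1) (by omega) (by omega)
      have h1 : n (s + 1) ≤ n s := hmono s hs1 hlt
      have h2 : n r ≤ n (s + 1) := hnr k (s + 1) (by omega) (by omega)
      rw [hq s hs1 hlt, hih]
      have hx : (p s ^ i s) * X ^ (n s - n (s + 1)) *
          (X ^ (n (s + 1) - n r) * ((∏ t ∈ Finset.Icc (s+1) r, p t ^ i t) %ₘ X ^ (n r + 1)))
          = (p s ^ i s) * X ^ (n s - n r) *
            ((∏ t ∈ Finset.Icc (s+1) r, p t ^ i t) %ₘ X ^ (n r + 1)) := by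
        rw [← mul_assoc, mul_assoc (p s ^ i s), ← pow_add,
          show n s - n (s + 1) + (n (s + 1) - n r) = n s - n r by omega]
      rw [hx, show n s + 1 = (n s - n r) + (n r + 1) by omega,
        key_step _ _ _ _ (Nat.succ_pos _)]
      congr 2
      have hins : Finset.Icc s r = insert s (Finset.Icc (s + 1) r) := by
        ext x; simp [Finset.mem_Icc]; omega
      rw [hins, Finset.prod_insert (by simp)]
  have h1r := main (r - 1) 1 le_rfl (by omega)
  have hnr1 : n r ≤ n 1 := hnr (r - 1) 1 le_rfl (by omega)
  refine ⟨h1r, ?_, ?_⟩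
  · intro j hj
    rw [h1r, coeff_X_pow_mul', if_pos (Nat.le_add_right _ _), Nat.add_sub_cancel_left,
      coeff_mod_X_pow, if_pos (by omega)]
  · intro t ht
    rw [h1r, coeff_X_pow_mul']
    rcases ht with h | h
    · rw [if_neg (by omega)]
    · by_cases he : n 1 - n r ≤ t
      · rw [if_pos he, coeff_mod_X_pow, if_neg (by omega)]
      · rw [if_neg he]
end

section
/- Let n ≥ 0, let M be the single real Jordan block of size 2(n+1) with eigenvalues ±i (2×2 blocks Λ = [[0,1],[−1,0]] on the block diagonal, the 2×2 identity on the block superdiagonal, zero blocks elsewhere), and let N = −(M^{−1})^T. Let C be the companion matrix of the monic polynomial (1+μ²)^{n+1} = Z_0 + Z_1μ + ⋯ + Z_{2n+1}μ^{2n+1} + μ^{2n+2}: the (2n+2)×(2n+2) matrix with ones on the subdiagonal, last column (−Z_0, −Z_1, …, −Z_{2n+1})^T, and zeros elsewhere. Let B be the real (2n+2)×(2n+2) matrix whose j-th column equals N^{j−1}·e_1 for j = 1, …, 2n+2, where e_1 is the first standard basis vector. Then B is invertible and N·B = B·C. -/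
set_option maxRecDepth 8000

open Polynomial Matrix Finset

def Jblock (n : ℕ) : Matrix (Fin (2 * (n + 1))) (Fin (2 * (n + 1))) ℝ :=
  Matrix.of fun a b =>
    if (a : ℕ) % 2 = 0 ∧ (b : ℕ) = (a : ℕ) + 1 then 1
    else if (a : ℕ) % 2 = 1 ∧ (a : ℕ) = (b : ℕ) + 1 then -1
    else if (b : ℕ) = (a : ℕ) + 2 then 1 else 0

namespace Stmt11Aux

variable (n : ℕ)

def Smat : Matrix (Fin (2 * (n + 1))) (Fin (2 * (n + 1))) ℝ :=
  Matrix.of fun a b => if (b : ℕ) = (a : ℕ) + 2 then 1 else 0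

def Jmat : Matrix (Fin (2 * (n + 1))) (Fin (2 * (n + 1))) ℝ :=
  Matrix.of fun a b =>
    if (a : ℕ) % 2 = 0 ∧ (b : ℕ) = (a : ℕ) + 1 then 1
    else if (a : ℕ) % 2 = 1 ∧ (a : ℕ) = (b : ℕ) + 1 then -1 else 0

variable {n}

lemma Jmat_apply (a b : Fin (2 * (n + 1))) :
    Jmat n a b = if (a : ℕ) % 2 = 0 ∧ (b : ℕ) = (a : ℕ) + 1 then 1
      else if (a : ℕ) % 2 = 1 ∧ (a : ℕ) = (b : ℕ) + 1 then -1 else 0 := rfl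

lemma Smat_apply (a b : Fin (2 * (n + 1))) :
    Smat n a b = if (b : ℕ) = (a : ℕ) + 2 then 1 else 0 := rfl

variable (n)

lemma J_mul_J : Jmat n * Jmat n = -1 := by
  ext a b
  have ha' := a.isLt
  have hb' := b.isLt
  rw [Matrix.mul_apply, Matrix.neg_apply, Matrix.one_apply]
  rcases Nat.even_or_odd (a : ℕ) with ha | ha
  · have ha0 : (a : ℕ) % 2 = 0 := Nat.even_iff.mp ha
    have h1 : (a : ℕ) + 1 < 2 * (n + 1) := by omega
    rw [Finset.sum_eq_single (⟨(a : ℕ) + 1, h1⟩ : Fin (2 * (n + 1)))]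
    · simp only [Jmat_apply, Fin.val_mk, ← Fin.val_eq_val, and_true, true_and]
      split_ifs <;> first | rfl | omega | norm_num | (exfalso; omega) | norm_num | (exfalso; omega)
    · intro c _ hc
      have hc' : (c : ℕ) ≠ (a : ℕ) + 1 := fun h => hc (Fin.ext (by simpa using h))
      rw [Jmat_apply, if_neg (by omega), if_neg (by omega), zero_mul]
    · simp
  · have ha1 : (a : ℕ) % 2 = 1 := Nat.odd_iff.mp ha
    have h1 : (a : ℕ) - 1 < 2 * (n + 1) := by omega
    rw [Finset.sum_eq_single (⟨(a : ℕ) - 1, h1⟩ : Fin (2 * (n + 1)))]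
    · simp only [Jmat_apply, Fin.val_mk, ← Fin.val_eq_val, and_true, true_and]
      split_ifs <;> first | rfl | omega | norm_num | (exfalso; omega) | norm_num | (exfalso; omega)
    · intro c _ hc
      have hc' : (c : ℕ) ≠ (a : ℕ) - 1 := fun h => hc (Fin.ext (by simpa using h))
      rw [Jmat_apply, if_neg (by omega), if_neg (by omega), zero_mul]
    · simp

lemma J_mul_S_apply (a b : Fin (2 * (n + 1))) :
    (Jmat n * Smat n) a b = if (a : ℕ) % 2 = 0 ∧ (b : ℕ) = (a : ℕ) + 3 then 1
      else if (a : ℕ) % 2 = 1 ∧ (b : ℕ) = (a : ℕ) + 1 then -1 else 0 := by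
  have ha' := a.isLt
  have hb' := b.isLt
  rw [Matrix.mul_apply]
  by_cases hb : 2 ≤ (b : ℕ)
  · have h1 : (b : ℕ) - 2 < 2 * (n + 1) := by omega
    rw [Finset.sum_eq_single (⟨(b : ℕ) - 2, h1⟩ : Fin (2 * (n + 1)))]
    · simp only [Jmat_apply, Smat_apply, Fin.val_mk, and_true, true_and]
      split_ifs <;> first | rfl | omega | norm_num | (exfalso; omega) | norm_num | (exfalso; omega)
    · intro c _ hc
      have hc' : (b : ℕ) ≠ (c : ℕ) + 2 := fun h => hc (Fin.ext (by simp; omega))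
      rw [Smat_apply, if_neg hc', mul_zero]
    · simp
  · rw [Finset.sum_eq_zero, if_neg (by omega), if_neg (by omega)]
    intro c _
    rw [Smat_apply, if_neg (by omega), mul_zero]

lemma S_mul_J_apply (a b : Fin (2 * (n + 1))) :
    (Smat n * Jmat n) a b = if (a : ℕ) % 2 = 0 ∧ (b : ℕ) = (a : ℕ) + 3 then 1
      else if (a : ℕ) % 2 = 1 ∧ (b : ℕ) = (a : ℕ) + 1 then -1 else 0 := by
  have ha' := a.isLt
  have hb' := b.isLt
  rw [Matrix.mul_apply]
  by_cases ha : (a : ℕ) + 2 < 2 * (n + 1)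
  · rw [Finset.sum_eq_single (⟨(a : ℕ) + 2, ha⟩ : Fin (2 * (n + 1)))]
    · simp only [Jmat_apply, Smat_apply, Fin.val_mk, and_true, true_and]
      split_ifs <;> first | rfl | omega | norm_num | (exfalso; omega) | norm_num | (exfalso; omega)
    · intro c _ hc
      have hc' : (c : ℕ) ≠ (a : ℕ) + 2 := fun h => hc (Fin.ext (by simpa using h))
      rw [Smat_apply, if_neg (by omega), zero_mul]
    · simp
  · rw [Finset.sum_eq_zero, if_neg (by omega), if_neg (by omega)]
    intro c _
    have hc' := c.isLt
    rw [Smat_apply, if_neg (by omega), zero_mul]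

lemma J_mul_S_comm : Jmat n * Smat n = Smat n * Jmat n := by
  ext a b; rw [J_mul_S_apply, S_mul_J_apply]

lemma Smat_pow (k : ℕ) :
    (Smat n) ^ k = Matrix.of (fun a b : Fin (2 * (n + 1)) =>
      if (b : ℕ) = (a : ℕ) + 2 * k then (1 : ℝ) else 0) := by
  induction k with
  | zero =>
    ext a b
    simp only [pow_zero, Matrix.one_apply, Matrix.of_apply, ← Fin.val_eq_val]
    split_ifs <;> first | rfl | omega | norm_num | (exfalso; omega)
  | succ k ih =>
    ext a b
    have hb' := b.isLt
    rw [pow_succ, ih, Matrix.mul_apply]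
    simp only [Matrix.of_apply]
    by_cases hb : (b : ℕ) = (a : ℕ) + 2 * (k + 1)
    · have h1 : (a : ℕ) + 2 * k < 2 * (n + 1) := by omega
      rw [Finset.sum_eq_single (⟨(a : ℕ) + 2 * k, h1⟩ : Fin (2 * (n + 1)))]
      · rw [Smat_apply, Fin.val_mk, if_pos rfl, if_pos (by omega), if_pos hb, one_mul]
      · intro c _ hc
        rw [if_neg (fun h => hc (Fin.ext (by simpa using h))), zero_mul]
      · simp
    · rw [Finset.sum_eq_zero, if_neg hb]
      intro c _
      by_cases h1 : (c : ℕ) = (a : ℕ) + 2 * k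
      · rw [if_pos h1, one_mul, Smat_apply, if_neg (by omega)]
      · rw [if_neg h1, zero_mul]

lemma Smat_pow_eq_zero : (Smat n) ^ (n + 1) = 0 := by
  rw [Smat_pow]
  ext a b
  have hb' := b.isLt
  simp only [Matrix.of_apply, Matrix.zero_apply]
  rw [if_neg (by omega)]

lemma Jblock_eq : Jblock n = Jmat n + Smat n := by
  ext a b
  simp only [Jblock, Matrix.add_apply, Jmat_apply, Smat_apply, Matrix.of_apply]
  split_ifs <;> first | rfl | omega | norm_num | (exfalso; omega)

end Stmt11Aux

namespace Stmt11Aux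

variable (n : ℕ)

local notation "Mat" => Matrix (Fin (2 * (n + 1))) (Fin (2 * (n + 1))) ℝ

def JT : Matrix (Fin (2 * (n + 1))) (Fin (2 * (n + 1))) ℝ := (Jmat n)ᵀ
def ST : Matrix (Fin (2 * (n + 1))) (Fin (2 * (n + 1))) ℝ := (Smat n)ᵀ
def xx : Matrix (Fin (2 * (n + 1))) (Fin (2 * (n + 1))) ℝ := JT n * ST n
def ww : Matrix (Fin (2 * (n + 1))) (Fin (2 * (n + 1))) ℝ :=
  ∑ k ∈ Finset.range (n + 1), xx n ^ k
def x0 : Matrix (Fin (2 * (n + 1))) (Fin (2 * (n + 1))) ℝ := Jmat n * Smat n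
def w0 : Matrix (Fin (2 * (n + 1))) (Fin (2 * (n + 1))) ℝ :=
  ∑ k ∈ Finset.range (n + 1), x0 n ^ k

lemma hTcomm : ST n * JT n = JT n * ST n := by
  have h := congrArg Matrix.transpose (J_mul_S_comm n)
  simpa [Matrix.transpose_mul, JT, ST] using h

lemma hJT2 : JT n * JT n = -1 := by
  have h := congrArg Matrix.transpose (J_mul_J n)
  simpa [Matrix.transpose_mul, JT] using h

lemma hSTnil : ST n ^ (n + 1) = 0 := by
  rw [ST, ← Matrix.transpose_pow, Smat_pow_eq_zero, Matrix.transpose_zero]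

lemma commJS : Commute (JT n) (ST n) := (hTcomm n).symm

lemma hxxnil : xx n ^ (n + 1) = 0 := by
  rw [xx, (commJS n).mul_pow, hSTnil, mul_zero]

lemma commJx : Commute (JT n) (xx n) := (Commute.refl (JT n)).mul_right (commJS n)

lemma commJw : Commute (JT n) (ww n) :=
  Commute.sum_right _ _ _ fun k _ => (commJx n).pow_right k

lemma commxw : Commute (xx n) (ww n) :=
  Commute.sum_right _ _ _ fun k _ => (Commute.refl (xx n)).pow_right k

lemma hw1 : ww n * (1 - xx n) = 1 := by
  have h := geom_sum_mul (xx n) (n + 1)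
  rw [hxxnil n] at h
  have : ww n * (1 - xx n) = -(ww n * (xx n - 1)) := by noncomm_ring
  rw [this, ww, h]; norm_num

lemma hw2 : (1 - xx n) * ww n = 1 := by
  have h := mul_geom_sum (xx n) (n + 1)
  rw [hxxnil n] at h
  have : (1 - xx n) * ww n = -((xx n - 1) * ww n) := by noncomm_ring
  rw [this, ww, h]; norm_num

lemma hx0nil : x0 n ^ (n + 1) = 0 := by
  have c : Commute (Jmat n) (Smat n) := J_mul_S_comm n
  rw [x0, c.mul_pow, Smat_pow_eq_zero, mul_zero]

lemma hMright : Jblock n * (-Jmat n * w0 n) = 1 := by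
  have h1 : Jblock n * (-Jmat n * w0 n) = (-(Jmat n * Jmat n) - Smat n * Jmat n) * w0 n := by
    rw [Jblock_eq]; noncomm_ring
  rw [h1, J_mul_J, ← J_mul_S_comm]
  have h2 : (-(-1 : Mat) - Jmat n * Smat n) * w0 n = (1 - x0 n) * w0 n := by
    rw [x0, neg_neg]
  rw [h2]
  have h := mul_geom_sum (x0 n) (n + 1)
  rw [hx0nil n] at h
  have : (1 - x0 n) * w0 n = -((x0 n - 1) * w0 n) := by noncomm_ring
  rw [this, w0, h]; norm_num

lemma hMinv : (Jblock n)⁻¹ = -Jmat n * w0 n := Matrix.inv_eq_right_inv (hMright n)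

lemma hNform : -((Jblock n)⁻¹)ᵀ = ww n * JT n := by
  rw [hMinv, Matrix.transpose_mul, Matrix.transpose_neg, Matrix.mul_neg, neg_neg]
  congr 1
  rw [w0, Matrix.transpose_sum]
  unfold ww
  refine Finset.sum_congr rfl fun k _ => ?_
  rw [Matrix.transpose_pow, x0, Matrix.transpose_mul, ← ST, ← JT, hTcomm, ← xx]

lemma hN2 : ww n * JT n * (ww n * JT n) = -(ww n * ww n) := by
  calc ww n * JT n * (ww n * JT n) = ww n * (JT n * ww n) * JT n := by noncomm_ring
    _ = ww n * (ww n * JT n) * JT n := by rw [(commJw n).eq]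
    _ = ww n * ww n * (JT n * JT n) := by noncomm_ring
    _ = -(ww n * ww n) := by rw [hJT2]; noncomm_ring

lemma hkey : (1 : Mat) + ww n * JT n * (ww n * JT n) = ww n * ww n * (xx n - 2) * xx n := by
  rw [hN2]
  have h1 : ww n * ww n * ((1 - xx n) * (1 - xx n)) = 1 := by
    calc ww n * ww n * ((1 - xx n) * (1 - xx n))
        = ww n * (ww n * (1 - xx n)) * (1 - xx n) := by noncomm_ring
      _ = 1 := by rw [hw1, mul_one, hw1]
  have h2 : ww n * ww n * (xx n - 2) * xx n
      = ww n * ww n * ((1 - xx n) * (1 - xx n)) - ww n * ww n := by noncomm_ring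
  rw [h2, h1]
  noncomm_ring

lemma commU : Commute (ww n * ww n * (xx n - 2)) (xx n) := by
  have c1 : Commute (xx n) (ww n * ww n * (xx n - 2)) :=
    (((commxw n).mul_right (commxw n)).mul_right
      (((Commute.refl (xx n)).sub_right (Commute.ofNat_right _ 2))))
  exact c1.symm

lemma hpow (k : ℕ) : ((1 : Mat) + ww n * JT n * (ww n * JT n)) ^ k
    = (ww n * ww n * (xx n - 2)) ^ k * xx n ^ k := by
  rw [hkey, (commU n).mul_pow]

lemma hnilfull : ((1 : Mat) + ww n * JT n * (ww n * JT n)) ^ (n + 1) = 0 := by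
  rw [hpow, hxxnil, mul_zero]

lemma unit_ww : IsUnit (ww n) :=
  (Matrix.isUnit_iff_isUnit_det (A := ww n)).mpr (Matrix.isUnit_det_of_right_inverse (hw1 n))

lemma unit_JT : IsUnit (JT n) := by
  refine (Matrix.isUnit_iff_isUnit_det (A := JT n)).mpr
    (Matrix.isUnit_det_of_right_inverse (B := -JT n) ?_)
  rw [mul_neg, hJT2, neg_neg]

lemma unit_xsub2 : IsUnit (xx n - 2) := by
  have hnil : IsNilpotent ((2 : ℝ)⁻¹ • xx n) := by
    refine ⟨n + 1, ?_⟩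
    rw [_root_.smul_pow, hxxnil, smul_zero]
  have h1 : IsUnit ((1 : Mat) - (2 : ℝ)⁻¹ • xx n) := hnil.isUnit_one_sub
  have h20 : ((2 : ℝ) • (1 : Mat)) = 2 := by rw [two_smul]; norm_num
  have h2 : xx n - 2 = (algebraMap ℝ Mat (-2)) * ((1 : Mat) - (2 : ℝ)⁻¹ • xx n) := by
    rw [Algebra.algebraMap_eq_smul_one, Matrix.smul_mul, one_mul, smul_sub, smul_smul,
      show ((-2 : ℝ) * 2⁻¹) = -1 by norm_num, neg_smul 1, one_smul, sub_neg_eq_add,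
      neg_smul, h20]
    abel
  rw [h2]
  exact ((isUnit_iff_ne_zero.mpr (by norm_num : (-2:ℝ) ≠ 0)).map (algebraMap ℝ Mat)).mul h1

end Stmt11Aux

namespace Stmt11Aux

variable (n : ℕ)

local notation "Mat" => Matrix (Fin (2 * (n + 1))) (Fin (2 * (n + 1))) ℝ

lemma ST_pow_mulVec :
    (ST n ^ n) *ᵥ (Pi.single (0 : Fin (2 * (n + 1))) (1 : ℝ))
      = Pi.single (⟨2 * n, by omega⟩ : Fin (2 * (n + 1))) (1 : ℝ) := by
  funext a
  rw [ST, ← Matrix.transpose_pow, Smat_pow, Matrix.mulVec_single_one]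
  simp only [Matrix.col_apply, Matrix.transpose_apply, Matrix.of_apply, mul_one, Pi.single_apply, Fin.ext_iff,
    Fin.val_mk, Fin.val_zero, zero_add]

lemma hnonzero :
    ((1 : Mat) + ww n * JT n * (ww n * JT n)) ^ n *ᵥ Pi.single (0 : Fin (2 * (n + 1))) (1 : ℝ)
      ≠ 0 := by
  have hxpow : xx n ^ n = JT n ^ n * ST n ^ n := by rw [xx, (commJS n).mul_pow]
  have hsplit : ((1 : Mat) + ww n * JT n * (ww n * JT n)) ^ n
      = ((ww n * ww n * (xx n - 2)) ^ n * JT n ^ n) * ST n ^ n := by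
    rw [hpow, hxpow, ← mul_assoc]
  have hU : IsUnit ((ww n * ww n * (xx n - 2)) ^ n * JT n ^ n) :=
    ((((unit_ww n).mul (unit_ww n)).mul (unit_xsub2 n)).pow n).mul ((unit_JT n).pow n)
  rw [hsplit, ← Matrix.mulVec_mulVec, ST_pow_mulVec]
  intro hcon
  have hinj := Matrix.mulVec_injective_iff_isUnit.mpr hU
  have h0 : ((ww n * ww n * (xx n - 2)) ^ n * JT n ^ n) *ᵥ
      (0 : Fin (2 * (n + 1)) → ℝ) = 0 := Matrix.mulVec_zero _
  have := hinj (hcon.trans h0.symm)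
  have h1 := congrFun this (⟨2 * n, by omega⟩ : Fin (2 * (n + 1)))
  rw [Pi.single_eq_same] at h1
  exact one_ne_zero (h1.trans rfl)

lemma monic_base : ((1 : ℝ[X]) + X ^ 2).Monic := by
  rw [add_comm, ← Polynomial.C_1]
  exact Polynomial.monic_X_pow_add (by simpa using Polynomial.degree_C_le.trans_lt (by norm_num))

lemma natDegree_base : ((1 : ℝ[X]) + X ^ 2).natDegree = 2 := by
  rw [add_comm, ← Polynomial.C_1]
  exact Polynomial.natDegree_X_pow_add_C

lemma irr_base : Irreducible ((1 : ℝ[X]) + X ^ 2) := by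
  rw [Polynomial.irreducible_iff_roots_eq_zero_of_degree_le_three (by rw [natDegree_base])
    (by rw [natDegree_base]; norm_num)]
  rw [Multiset.eq_zero_iff_forall_notMem]
  intro r hr
  rw [Polynomial.mem_roots (monic_base).ne_zero] at hr
  rw [Polynomial.IsRoot, Polynomial.eval_add, Polynomial.eval_one, Polynomial.eval_pow,
    Polynomial.eval_X] at hr
  nlinarith [sq_nonneg r]

lemma prime_base : Prime ((1 : ℝ[X]) + X ^ 2) := (irr_base).prime

end Stmt11Aux

namespace Stmt11Aux

lemma sum_mulVec' {ι R m : Type*} [NonUnitalNonAssocSemiring R] [Fintype m]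
    (s : Finset ι) (f : ι → Matrix m m R) (v : m → R) :
    (∑ i ∈ s, f i) *ᵥ v = ∑ i ∈ s, f i *ᵥ v := by
  classical
  induction s using Finset.induction with
  | empty => simp [Matrix.zero_mulVec]
  | insert _ _ h ih => rw [Finset.sum_insert h, Finset.sum_insert h, Matrix.add_mulVec, ih]

end Stmt11Aux

open Stmt11Aux

/-- For `M` the single real Jordan block with eigenvalues `±i`, `N = −(M⁻¹)ᵀ`,
`C` the companion matrix of `(1+μ²)^{n+1}`, and `B` the matrix with columns
`e_1, N e_1, …, N^{2n+1} e_1`: `B` is invertible and `N·B = B·C`. -/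
theorem stmt_11 (n : ℕ)
    (N : Matrix (Fin (2 * (n + 1))) (Fin (2 * (n + 1))) ℝ)
    (hN : N = -(Matrix.transpose (Jblock n)⁻¹))
    (Cmat : Matrix (Fin (2 * (n + 1))) (Fin (2 * (n + 1))) ℝ)
    (hC : Cmat = Matrix.of fun i j : Fin (2 * (n + 1)) =>
      if (j : ℕ) = 2 * n + 1 then -(((1 + X ^ 2 : Polynomial ℝ) ^ (n + 1)).coeff (i : ℕ))
      else if (i : ℕ) = (j : ℕ) + 1 then 1 else 0)
    (B : Matrix (Fin (2 * (n + 1))) (Fin (2 * (n + 1))) ℝ)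
    (hB : B = Matrix.of fun i j : Fin (2 * (n + 1)) =>
      (N ^ (j : ℕ)).mulVec (Pi.single (0 : Fin (2 * (n + 1))) 1) i) :
    IsUnit B ∧ N * B = B * Cmat := by
  rw [hNform n] at hN
  set e : Fin (2 * (n + 1)) → ℝ := Pi.single (0 : Fin (2 * (n + 1))) 1 with he
  set p : ℝ[X] := ((1 : ℝ[X]) + X ^ 2) ^ (n + 1) with hp
  have hNpow : ((1 : Matrix (Fin (2 * (n + 1))) (Fin (2 * (n + 1))) ℝ) + N * N) ^ (n + 1) = 0 := by
    rw [hN]; exact hnilfull n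
  have hNnz : ((1 : Matrix (Fin (2 * (n + 1))) (Fin (2 * (n + 1))) ℝ) + N * N) ^ n *ᵥ e ≠ 0 := by
    rw [hN]; exact hnonzero n
  have haevk : ∀ k : ℕ, aeval N (((1 : ℝ[X]) + X ^ 2) ^ k)
      = ((1 : Matrix (Fin (2 * (n + 1))) (Fin (2 * (n + 1))) ℝ) + N * N) ^ k := by
    intro k
    rw [map_pow, map_add, _root_.map_one, map_pow, aeval_X, pow_two]
  have haev : aeval N p = 0 := by rw [hp, haevk, hNpow]
  have hBapply : ∀ i j : Fin (2 * (n + 1)), B i j = (N ^ (j : ℕ) *ᵥ e) i := by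
    intro i j; rw [hB]; rfl
  have hBmulVec : ∀ c : Fin (2 * (n + 1)) → ℝ,
      B *ᵥ c = ∑ j : Fin (2 * (n + 1)), c j • (N ^ (j : ℕ) *ᵥ e) := by
    intro c
    funext i
    rw [Finset.sum_apply]
    rw [show (B *ᵥ c) i = ∑ j, B i j * c j from rfl]
    exact Finset.sum_congr rfl fun j _ => by
      rw [hBapply, Pi.smul_apply, smul_eq_mul, mul_comm]
  have hmonicp : p.Monic := (monic_base).pow _
  have hdegp : p.natDegree = 2 * n + 2 := by
    rw [hp, (monic_base).natDegree_pow, natDegree_base]; ring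
  constructor
  · -- IsUnit B
    rw [Matrix.isUnit_iff_isUnit_det, isUnit_iff_ne_zero]
    intro hdet
    obtain ⟨c, hc0, hcB⟩ := (Matrix.exists_mulVec_eq_zero_iff).mpr hdet
    set q : ℝ[X] := ∑ j : Fin (2 * (n + 1)), Polynomial.C (c j) * X ^ (j : ℕ) with hq
    have hcoeff : ∀ j : Fin (2 * (n + 1)), q.coeff (j : ℕ) = c j := by
      intro j
      rw [hq, Polynomial.finset_sum_coeff]
      have h1 : ∀ j' : Fin (2 * (n + 1)),
          (Polynomial.C (c j') * X ^ (j' : ℕ)).coeff (j : ℕ)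
            = if j = j' then c j' else 0 := by
        intro j'
        rw [Polynomial.coeff_C_mul_X_pow]
        simp [Fin.val_eq_val]
      rw [Finset.sum_congr rfl fun j' _ => h1 j', Finset.sum_ite_eq,
        if_pos (Finset.mem_univ j)]
    have hq0 : q ≠ 0 := by
      obtain ⟨j, hj⟩ := Function.ne_iff.mp hc0
      intro h
      apply hj
      rw [Pi.zero_apply, ← hcoeff j, h, Polynomial.coeff_zero]
    have hqe : (aeval N q) *ᵥ e = 0 := by
      have h1 : (aeval N q) *ᵥ e = ∑ j : Fin (2 * (n + 1)), c j • (N ^ (j : ℕ) *ᵥ e) := by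
        rw [hq, map_sum, sum_mulVec']
        refine Finset.sum_congr rfl fun j _ => ?_
        rw [_root_.map_mul, aeval_C, Polynomial.aeval_X_pow, ← Algebra.smul_def,
          Matrix.smul_mulVec]
      rw [h1, ← hBmulVec, hcB]
    set d : ℝ[X] := EuclideanDomain.gcd q p with hd
    have hd0 : d ≠ 0 := by
      intro h
      exact hq0 (EuclideanDomain.gcd_eq_zero_iff.mp h).1
    have hde : (aeval N d) *ᵥ e = 0 := by
      rw [hd, EuclideanDomain.gcd_eq_gcd_ab q p, map_add, Matrix.add_mulVec,
        mul_comm q _, mul_comm p _, _root_.map_mul, _root_.map_mul, ← Matrix.mulVec_mulVec,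
        ← Matrix.mulVec_mulVec, hqe, haev, Matrix.mulVec_zero, Matrix.zero_mulVec,
        Matrix.mulVec_zero, add_zero]
    obtain ⟨k, hk, hassoc⟩ := (dvd_prime_pow prime_base (n + 1)).mp
      (EuclideanDomain.gcd_dvd_right q p)
    obtain ⟨u, hu⟩ := hassoc
    have hqdeg : q.natDegree ≤ 2 * n + 1 := by
      refine Polynomial.natDegree_sum_le_of_forall_le _ _ fun j _ => ?_
      refine le_trans (Polynomial.natDegree_C_mul_le _ _) ?_
      rw [Polynomial.natDegree_X_pow]
      have := j.isLt; omega
    have hddeg : d.natDegree ≤ 2 * n + 1 :=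
      le_trans (Polynomial.natDegree_le_of_dvd (EuclideanDomain.gcd_dvd_left q p) hq0) hqdeg
    have hkn : k ≤ n := by
      have h2k : (((1 : ℝ[X]) + X ^ 2) ^ k).natDegree = 2 * k := by
        rw [(monic_base).natDegree_pow, natDegree_base]; ring
      have hud : (((1 : ℝ[X]) + X ^ 2) ^ k).natDegree = d.natDegree := by
        rw [← hu, Polynomial.natDegree_mul hd0 u.ne_zero,
          Polynomial.natDegree_eq_zero_of_isUnit u.isUnit, add_zero]
      omega
    have hke : ((1 : Matrix (Fin (2 * (n + 1))) (Fin (2 * (n + 1))) ℝ) + N * N) ^ k *ᵥ e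
        = 0 := by
      rw [← haevk, ← hu, mul_comm d _, _root_.map_mul, ← Matrix.mulVec_mulVec, hde,
        Matrix.mulVec_zero]
    apply hNnz
    have hsplit : ((1 : Matrix (Fin (2 * (n + 1))) (Fin (2 * (n + 1))) ℝ) + N * N) ^ n
        = ((1 : Matrix (Fin (2 * (n + 1))) (Fin (2 * (n + 1))) ℝ) + N * N) ^ (n - k)
          * ((1 : Matrix (Fin (2 * (n + 1))) (Fin (2 * (n + 1))) ℝ) + N * N) ^ k := by
      rw [← pow_add, Nat.sub_add_cancel hkn]
    rw [hsplit, ← Matrix.mulVec_mulVec, hke, Matrix.mulVec_zero]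
  · -- N * B = B * Cmat
    have hNrep : N ^ (2 * n + 2)
        = -∑ r ∈ Finset.range (2 * n + 2), p.coeff r • N ^ r := by
      have hsum : (0 : Matrix (Fin (2 * (n + 1))) (Fin (2 * (n + 1))) ℝ)
          = ∑ r ∈ Finset.range (2 * n + 3), p.coeff r • N ^ r := by
        rw [← haev]
        exact Polynomial.aeval_eq_sum_range' (by omega) N
      have htop : p.coeff (2 * n + 2) = 1 := by
        rw [show 2 * n + 2 = p.natDegree from hdegp.symm]
        exact hmonicp.coeff_natDegree
      rw [Finset.sum_range_succ, htop, one_smul] at hsum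
      exact eq_neg_of_add_eq_zero_right hsum.symm
    ext i j
    rw [Matrix.mul_apply, Matrix.mul_apply]
    have hlhs : ∑ k, N i k * B k j = (N ^ ((j : ℕ) + 1) *ᵥ e) i := by
      rw [show ∑ k, N i k * B k j = (N *ᵥ (N ^ (j : ℕ) *ᵥ e)) i from
        Finset.sum_congr rfl fun k _ => by rw [hBapply]]
      rw [Matrix.mulVec_mulVec, ← pow_succ']
    rw [hlhs, hC]
    by_cases hj : (j : ℕ) = 2 * n + 1
    · rw [show (∑ k, B i k * (Matrix.of fun i j : Fin (2 * (n + 1)) =>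
          if (j : ℕ) = 2 * n + 1 then -(((1 + X ^ 2 : Polynomial ℝ) ^ (n + 1)).coeff (i : ℕ))
          else if (i : ℕ) = (j : ℕ) + 1 then 1 else 0) k j)
          = ∑ k : Fin (2 * (n + 1)), (N ^ (k : ℕ) *ᵥ e) i * (-(p.coeff (k : ℕ))) from
        Finset.sum_congr rfl fun k _ => by
          rw [Matrix.of_apply, if_pos hj, hBapply, hp]]
      rw [hj]
      rw [Fin.sum_univ_eq_sum_range (fun r => (N ^ r *ᵥ e) i * (-(p.coeff r)))]
      rw [show Finset.range (2 * (n + 1)) = Finset.range (2 * n + 2) from by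
        rw [show 2 * (n + 1) = 2 * n + 2 by ring]]
      have : (N ^ (2 * n + 1 + 1) *ᵥ e) i
          = -∑ r ∈ Finset.range (2 * n + 2), p.coeff r * ((N ^ r *ᵥ e) i) := by
        rw [show 2 * n + 1 + 1 = 2 * n + 2 by ring, hNrep, Matrix.neg_mulVec]
        rw [sum_mulVec']
        simp only [Pi.neg_apply, Finset.sum_apply, Matrix.smul_mulVec,
          Pi.smul_apply, smul_eq_mul]
      rw [this, ← Finset.sum_neg_distrib]
      exact Finset.sum_congr rfl fun r _ => by ring
    · have hj1 : (j : ℕ) + 1 < 2 * (n + 1) := by have := j.isLt; omega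
      rw [Finset.sum_eq_single (⟨(j : ℕ) + 1, hj1⟩ : Fin (2 * (n + 1)))]
      · rw [Matrix.of_apply, if_neg hj, if_pos rfl, mul_one, hBapply]
      · intro k _ hk
        have hk' : (k : ℕ) ≠ (j : ℕ) + 1 := fun h => hk (Fin.ext (by simpa using h))
        rw [Matrix.of_apply, if_neg hj, if_neg hk', mul_zero]
      · simp
end

section
/- Let n ≥ 0, Λ = [[0,1],[−1,0]], let M be the single real Jordan block of size 2(n+1) with eigenvalues ±i (2×2 blocks Λ on the block diagonal, the 2×2 identity on the block superdiagonal, zero blocks elsewhere), and let N = −(M^{−1})^T. Regard matrices of size 2(n+1) as (n+1)×(n+1) arrays of 2×2 blocks. Then for every a ≥ 1 and all block indices 1 ≤ i, j ≤ n+1, the 2×2 block of N^a in block position (i,j) equals C(a−1+i−j, i−j)·(−Λ)^{a+i−j} if i ≥ j, and equals the zero block if i < j. In particular (taking a = 1), the (i,j) block of N itself equals (−Λ)^{1+i−j} for i ≥ j and 0 for i < j. -/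
noncomputable def Jf (a b : ℕ) : ℝ :=
  if a % 2 = 0 ∧ b = a + 1 then 1
  else if a % 2 = 1 ∧ a = b + 1 then -1
  else if b = a + 2 then 1 else 0

noncomputable def Pm : ℕ → Matrix (Fin 2) (Fin 2) ℝ := fun e => (-(!![(0:ℝ),1;-1,0]))^e

lemma Pm_zero (u v : ℕ) (hu : u < 2) (hv : v < 2) :
    Pm 0 ⟨u,hu⟩ ⟨v,hv⟩ = if u = v then 1 else 0 := by
  unfold Pm
  rw [pow_zero, Matrix.one_apply]
  simp [Fin.ext_iff]

lemma Pm_succ (e u v : ℕ) (hu : u < 2) (hv : v < 2) :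
    Pm (e+1) ⟨u,hu⟩ ⟨v,hv⟩ =
      if v = 0 then Pm e ⟨u,hu⟩ ⟨1, by norm_num⟩ else -(Pm e ⟨u,hu⟩ ⟨0, by norm_num⟩) := by
  unfold Pm
  rw [pow_succ, Matrix.mul_apply, Fin.sum_univ_two]
  interval_cases v <;> simp [Matrix.neg_apply]

noncomputable def pm (e u v : ℕ) : ℝ :=
  if e % 4 = 0 then (if u = v then 1 else 0)
  else if e % 4 = 1 then (if u = 1 ∧ v = 0 then 1 else if u = 0 ∧ v = 1 then -1 else 0)
  else if e % 4 = 2 then (if u = v then -1 else 0)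
  else (if u = 1 ∧ v = 0 then -1 else if u = 0 ∧ v = 1 then 1 else 0)

lemma Pm_eq (e u : ℕ) (hu : u < 2) : ∀ v, (hv : v < 2) → Pm e ⟨u,hu⟩ ⟨v,hv⟩ = pm e u v := by
  induction e with
  | zero => intro v hv; rw [Pm_zero]; simp [pm]
  | succ b ih =>
      intro v hv
      rw [Pm_succ, ih 1 (by norm_num), ih 0 (by norm_num)]
      unfold pm
      rcases (show b % 4 = 0 ∨ b % 4 = 1 ∨ b % 4 = 2 ∨ b % 4 = 3 by omega) with h|h|h|h <;>
        rw [show (b+1) % 4 = (b % 4 + 1) % 4 by omega, h] <;> norm_num <;>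
        split_ifs <;> first | rfl | omega | norm_num

lemma pm_succ0 (e u : ℕ) : pm (e+1) u 0 = pm e u 1 := by
  unfold pm
  rcases (show e % 4 = 0 ∨ e % 4 = 1 ∨ e % 4 = 2 ∨ e % 4 = 3 by omega) with h|h|h|h <;>
    rw [show (e+1) % 4 = (e % 4 + 1) % 4 by omega, h] <;> norm_num <;>
    split_ifs <;> first | rfl | omega | norm_num

lemma pm_succ1 (e u : ℕ) : pm (e+1) u 1 = -(pm e u 0) := by
  unfold pm
  rcases (show e % 4 = 0 ∨ e % 4 = 1 ∨ e % 4 = 2 ∨ e % 4 = 3 by omega) with h|h|h|h <;>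
    rw [show (e+1) % 4 = (e % 4 + 1) % 4 by omega, h] <;> norm_num <;>
    split_ifs <;> first | rfl | omega | norm_num

noncomputable def Ff (a i j : ℕ) : ℝ :=
  if j / 2 ≤ i / 2 then
    ((a - 1 + (i / 2 - j / 2)).choose (i / 2 - j / 2) : ℝ) *
      pm (a + (i / 2 - j / 2)) (i % 2) (j % 2)
  else 0

lemma Ff_big {m i k : ℕ} (a : ℕ) (hi : i < m) (hm : m % 2 = 0) (hk : m ≤ k) :
    Ff a i k = 0 := by
  unfold Ff
  rw [if_neg]
  omega

lemma sum_Jf {m : ℕ} (hm : m % 2 = 0) {i : ℕ} (him : i < m) (g : ℕ → ℝ)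
    (hg : ∀ k, m ≤ k → g k = 0) :
    ∑ k ∈ Finset.range m, Jf i k * g k
      = (if i % 2 = 0 then g (i+1) else -(g (i-1))) + g (i+2) := by
  have hsum : ∀ k, Jf i k * g k =
      (if k = (if i % 2 = 0 then i+1 else i-1)
        then (if i % 2 = 0 then g (i+1) else -(g (i-1))) else 0)
      + (if k = i + 2 then g (i+2) else 0) := by
    intro k
    unfold Jf
    rcases Nat.mod_two_eq_zero_or_one i with h | h <;>
      simp only [h, true_and, false_and, if_false, Nat.zero_ne_one, one_ne_zero,
        if_true] <;>
      split_ifs <;>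
        first
          | (exfalso; omega)
          | (exfalso; tauto)
          | (subst_vars; ring1)
          | ((subst_vars; congr 2 <;> omega); done)
          | ((congr 2 <;> omega); done)
          | ((have hk : i - 1 = k := by omega); rw [hk]; ring1)
          | ring1
  rw [Finset.sum_congr rfl (fun k _ => hsum k), Finset.sum_add_distrib,
    Finset.sum_ite_eq' (Finset.range m), Finset.sum_ite_eq' (Finset.range m)]
  rcases Nat.mod_two_eq_zero_or_one i with h | h <;> simp only [h, Finset.mem_range] <;>
    split_ifs <;> simp_all <;> first | omega | (rw [hg] <;> omega)


lemma pm_zero' (u v : ℕ) : pm 0 u v = if u = v then 1 else 0 := by simp [pm]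

lemma coreI (m i j : ℕ) (hi : i < m) (hj : j < m) (hm : m % 2 = 0) :
    (if i % 2 = 0 then -Ff 1 j (i+1) else - -Ff 1 j (i-1)) + -Ff 1 j (i+2)
      = if i = j then (1:ℝ) else 0 := by
  rcases Nat.mod_two_eq_zero_or_one i with hpar | hpar
  · rw [if_pos hpar]
    unfold Ff
    rw [show (i+1)/2 = i/2 by omega, show (i+1)%2 = 1 by omega,
        show (i+2)/2 = i/2 + 1 by omega, show (i+2)%2 = 0 by omega]
    rcases lt_trichotomy (j/2) (i/2) with hc | hc | hc
    · rw [if_neg (by omega), if_neg (by omega), if_neg (by omega)]; ring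
    · rw [if_pos (by omega), if_neg (by omega),
        show j/2 - i/2 = 0 by omega,
        show (1:ℕ) - 1 + 0 = 0 from rfl, Nat.choose_self,
        show 1 + 0 = 0 + 1 from rfl, pm_succ1, pm_zero']
      rcases Nat.mod_two_eq_zero_or_one j with hq | hq <;> rw [hq]
      · rw [if_pos rfl, if_pos (show i = j by omega)]; norm_num
      · rw [if_neg one_ne_zero, if_neg (show ¬ i = j by omega)]; norm_num
    · rw [if_pos (by omega), if_pos (by omega), if_neg (by omega)]
      have h1 : j / 2 - i / 2 = (j / 2 - (i / 2 + 1)) + 1 := by omega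
      rw [h1]
      set q := j / 2 - (i / 2 + 1) with hqdef
      rw [show (1:ℕ) - 1 + (q+1) = q+1 by omega, show (1:ℕ) - 1 + q = q by omega,
        Nat.choose_self, Nat.choose_self,
        show 1 + (q+1) = (1+q)+1 by omega, pm_succ1]
      push_cast
      ring
  · rw [if_neg (by omega)]
    unfold Ff
    rw [show (i-1)/2 = i/2 by omega, show (i-1)%2 = 0 by omega,
        show (i+2)/2 = i/2 + 1 by omega, show (i+2)%2 = 1 by omega]
    rcases lt_trichotomy (j/2) (i/2) with hc | hc | hc
    · rw [if_neg (by omega), if_neg (by omega), if_neg (by omega)]; ring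
    · rw [if_pos (by omega), if_neg (by omega),
        show j/2 - i/2 = 0 by omega,
        show (1:ℕ) - 1 + 0 = 0 from rfl, Nat.choose_self,
        show 1 + 0 = 0 + 1 from rfl, pm_succ0, pm_zero']
      rcases Nat.mod_two_eq_zero_or_one j with hq | hq <;> rw [hq]
      · rw [if_neg (by omega), if_neg (show ¬ i = j by omega)]; norm_num
      · rw [if_pos rfl, if_pos (show i = j by omega)]; norm_num
    · rw [if_pos (by omega), if_pos (by omega), if_neg (by omega)]
      have h1 : j / 2 - i / 2 = (j / 2 - (i / 2 + 1)) + 1 := by omega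
      rw [h1]
      set q := j / 2 - (i / 2 + 1) with hqdef
      rw [show (1:ℕ) - 1 + (q+1) = q+1 by omega, show (1:ℕ) - 1 + q = q by omega,
        Nat.choose_self, Nat.choose_self,
        show 1 + (q+1) = (1+q)+1 by omega, pm_succ0]
      push_cast
      ring

lemma coreII (m i j a : ℕ) (ha : 1 ≤ a) (hi : i < m) (hj : j < m) (hm : m % 2 = 0) :
    (if j % 2 = 0 then -Ff (a+1) i (j+1) else - -Ff (a+1) i (j-1)) + -Ff (a+1) i (j+2)
      = Ff a i j := by
  rcases Nat.mod_two_eq_zero_or_one j with hpar | hpar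
  · rw [if_pos hpar]
    unfold Ff
    rw [show (j+1)/2 = j/2 by omega, show (j+1)%2 = 1 by omega,
        show (j+2)/2 = j/2 + 1 by omega, show (j+2)%2 = 0 by omega, hpar]
    rcases lt_trichotomy (i/2) (j/2) with hc | hc | hc
    · rw [if_neg (by omega), if_neg (by omega), if_neg (by omega)]; ring
    · rw [if_pos (by omega), if_neg (by omega), if_pos (by omega),
        show i/2 - j/2 = 0 by omega,
        show a + 1 - 1 + 0 = a by omega, show a - 1 + 0 = a - 1 by omega,
        Nat.choose_zero_right, Nat.choose_zero_right,
        show a + 1 + 0 = a + 1 by omega, show a + 0 = a by omega, pm_succ1]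
      push_cast
      ring
    · rw [if_pos (by omega), if_pos (by omega), if_pos (by omega)]
      have h1 : i / 2 - j / 2 = (i / 2 - (j / 2 + 1)) + 1 := by omega
      rw [h1]
      set q := i / 2 - (j / 2 + 1) with hqdef
      rw [show a + 1 - 1 + (q+1) = (a+q)+1 by omega,
          show a + 1 - 1 + q = a + q by omega,
          show a - 1 + (q+1) = a + q by omega,
          show a + 1 + (q+1) = ((a + (q+1)))+1 by omega,
          show a + 1 + q = a + (q+1) by omega,
          pm_succ1,
          show a + (q+1) = (a + q) + 1 by omega,
          Nat.choose_succ_succ ((a+q)) q]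
      push_cast
      ring
  · rw [if_neg (by omega)]
    unfold Ff
    rw [show (j-1)/2 = j/2 by omega, show (j-1)%2 = 0 by omega,
        show (j+2)/2 = j/2 + 1 by omega, show (j+2)%2 = 1 by omega, hpar]
    rcases lt_trichotomy (i/2) (j/2) with hc | hc | hc
    · rw [if_neg (by omega), if_neg (by omega), if_neg (by omega)]; ring
    · rw [if_pos (by omega), if_neg (by omega), if_pos (by omega),
        show i/2 - j/2 = 0 by omega,
        show a + 1 - 1 + 0 = a by omega, show a - 1 + 0 = a - 1 by omega,
        Nat.choose_zero_right, Nat.choose_zero_right,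
        show a + 1 + 0 = a + 1 by omega, show a + 0 = a by omega, pm_succ0]
      push_cast
      ring
    · rw [if_pos (by omega), if_pos (by omega), if_pos (by omega)]
      have h1 : i / 2 - j / 2 = (i / 2 - (j / 2 + 1)) + 1 := by omega
      rw [h1]
      set q := i / 2 - (j / 2 + 1) with hqdef
      rw [show a + 1 - 1 + (q+1) = (a+q)+1 by omega,
          show a + 1 - 1 + q = a + q by omega,
          show a - 1 + (q+1) = a + q by omega,
          show a + 1 + (q+1) = ((a + (q+1)))+1 by omega,
          show a + 1 + q = a + (q+1) by omega,
          pm_succ0,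
          show a + (q+1) = (a + q) + 1 by omega,
          Nat.choose_succ_succ ((a+q)) q]
      push_cast
      ring

lemma Jblock_eq_Jf (n : ℕ) (i k : Fin (2*(n+1))) : Jblock n i k = Jf (i:ℕ) (k:ℕ) := by
  simp only [Jblock, Jf, Matrix.of_apply]

noncomputable def FM (n a : ℕ) : Matrix (Fin (2*(n+1))) (Fin (2*(n+1))) ℝ :=
  Matrix.of fun i j => Ff a (i:ℕ) (j:ℕ)

lemma keyI (n : ℕ) : Jblock n * (-(Matrix.transpose (FM n 1))) = 1 := by
  ext i j
  rw [Matrix.mul_apply]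
  have step : ∀ k : Fin (2*(n+1)), Jblock n i k * (-(Matrix.transpose (FM n 1))) k j
      = Jf (i:ℕ) (k:ℕ) * (-(Ff 1 (j:ℕ) (k:ℕ))) := by
    intro k
    rw [Jblock_eq_Jf, Matrix.neg_apply, Matrix.transpose_apply]
    rfl
  have hconv : (∑ k : Fin (2*(n+1)), Jblock n i k * (-(Matrix.transpose (FM n 1))) k j)
       = ∑ k ∈ Finset.range (2*(n+1)), Jf (i:ℕ) k * -(Ff 1 (j:ℕ) k) := by
    rw [← Fin.sum_univ_eq_sum_range (fun k => Jf (i:ℕ) k * -(Ff 1 (j:ℕ) k)) (2*(n+1))]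
    exact Finset.sum_congr rfl (fun k _ => step k)
  rw [hconv, sum_Jf (by omega) i.2 (fun k => -(Ff 1 (j:ℕ) k))
      (fun k hk => by show -Ff 1 (j:ℕ) k = 0; rw [Ff_big 1 j.2 (by omega) hk, neg_zero])]
  have hcore := coreI (2*(n+1)) (i:ℕ) (j:ℕ) i.2 j.2 (by omega)
  rw [Matrix.one_apply]
  simp only [neg_neg] at hcore ⊢
  rw [hcore]
  by_cases h : i = j
  · rw [if_pos h, if_pos (by rw [h])]
  · rw [if_neg (by simpa [Fin.ext_iff] using h), if_neg h]

lemma keyII (n a : ℕ) (ha : 1 ≤ a) : FM n (a+1) * (-(Matrix.transpose (Jblock n))) = FM n a := by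
  ext i j
  rw [Matrix.mul_apply]
  have step : ∀ k : Fin (2*(n+1)), FM n (a+1) i k * (-(Matrix.transpose (Jblock n))) k j
      = Jf (j:ℕ) (k:ℕ) * (-(Ff (a+1) (i:ℕ) (k:ℕ))) := by
    intro k
    rw [Matrix.neg_apply, Matrix.transpose_apply, Jblock_eq_Jf]
    show Ff (a+1) (i:ℕ) (k:ℕ) * -(Jf (j:ℕ) (k:ℕ)) = _
    ring
  have hconv : (∑ k : Fin (2*(n+1)), FM n (a+1) i k * (-(Matrix.transpose (Jblock n))) k j)
       = ∑ k ∈ Finset.range (2*(n+1)), Jf (j:ℕ) k * -(Ff (a+1) (i:ℕ) k) := by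
    rw [← Fin.sum_univ_eq_sum_range (fun k => Jf (j:ℕ) k * -(Ff (a+1) (i:ℕ) k)) (2*(n+1))]
    exact Finset.sum_congr rfl (fun k _ => step k)
  rw [hconv, sum_Jf (by omega) j.2 (fun k => -(Ff (a+1) (i:ℕ) k))
      (fun k hk => by show -Ff (a+1) (i:ℕ) k = 0; rw [Ff_big (a+1) i.2 (by omega) hk, neg_zero])]
  have hcore := coreII (2*(n+1)) (i:ℕ) (j:ℕ) a ha i.2 j.2 (by omega)
  simp only [neg_neg] at hcore ⊢
  rw [hcore]
  rfl

/-- For `N = −(M⁻¹)ᵀ`, `M` the single real Jordan block of size `2(n+1)` with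
eigenvalues `±i`: for `a ≥ 1` the 2×2 block of `N^a` at block position `(p, q)`
(0-based) equals `C(a−1+p−q, p−q)·(−Λ)^{a+p−q}` for `p ≥ q` and `0` for `p < q`;
in particular the `(p,q)` block of `N` is `(−Λ)^{1+p−q}` for `p ≥ q` and `0` else. -/
theorem stmt_12 (n : ℕ)
    (N : Matrix (Fin (2 * (n + 1))) (Fin (2 * (n + 1))) ℝ)
    (hN : N = -(Matrix.transpose (Jblock n)⁻¹))
    (Λ : Matrix (Fin 2) (Fin 2) ℝ) (hΛ : Λ = !![(0 : ℝ), 1; -1, 0]) :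
    (∀ a : ℕ, 1 ≤ a → ∀ p q : Fin (n + 1), ∀ u v : Fin 2,
      (N ^ a) ⟨2 * (p : ℕ) + (u : ℕ), by have := p.2; have := u.2; omega⟩
              ⟨2 * (q : ℕ) + (v : ℕ), by have := q.2; have := v.2; omega⟩
        = if (q : ℕ) ≤ (p : ℕ)
            then (((a - 1 + ((p : ℕ) - (q : ℕ))).choose ((p : ℕ) - (q : ℕ)) : ℝ) •
              ((-Λ) ^ (a + ((p : ℕ) - (q : ℕ))))) u v
            else 0) ∧
    (∀ p q : Fin (n + 1), ∀ u v : Fin 2,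
      N ⟨2 * (p : ℕ) + (u : ℕ), by have := p.2; have := u.2; omega⟩
        ⟨2 * (q : ℕ) + (v : ℕ), by have := q.2; have := v.2; omega⟩
        = if (q : ℕ) ≤ (p : ℕ) then ((-Λ) ^ (1 + ((p : ℕ) - (q : ℕ)))) u v else 0) := by
  
  subst hΛ
  have hI := keyI n
  have hinv : (Jblock n)⁻¹ = -(Matrix.transpose (FM n 1)) := Matrix.inv_eq_right_inv hI
  have hN1 : N = FM n 1 := by
    rw [hN, hinv, Matrix.transpose_neg, Matrix.transpose_transpose, neg_neg]
  have hML : (-(Matrix.transpose (FM n 1))) * Jblock n = 1 := mul_eq_one_comm.mp hI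
  have hXN : (-(Matrix.transpose (Jblock n))) * N = 1 := by
    rw [hN, neg_mul_neg, ← Matrix.transpose_mul, hinv, hML, Matrix.transpose_one]
  have hpow : ∀ a : ℕ, 1 ≤ a → N ^ a = FM n a := by
    intro a ha
    induction a with
    | zero => omega
    | succ b ih =>
      rcases Nat.lt_or_ge b 1 with hb | hb
      · have hb0 : b = 0 := by omega
        subst hb0
        rw [pow_one]; exact hN1
      · have hFb := ih hb
        have h2 := keyII n b hb
        have hstep : FM n (b+1) = FM n b * N := by
          calc FM n (b+1) = FM n (b+1) * ((-(Matrix.transpose (Jblock n))) * N) := by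
                rw [hXN, mul_one]
            _ = (FM n (b+1) * (-(Matrix.transpose (Jblock n)))) * N := by rw [mul_assoc]
            _ = FM n b * N := by rw [h2]
        rw [pow_succ, hFb, ← hstep]
  have main : ∀ a : ℕ, 1 ≤ a → ∀ p q : Fin (n + 1), ∀ u v : Fin 2,
      (N ^ a) ⟨2 * (p : ℕ) + (u : ℕ), by have := p.2; have := u.2; omega⟩
              ⟨2 * (q : ℕ) + (v : ℕ), by have := q.2; have := v.2; omega⟩
        = if (q : ℕ) ≤ (p : ℕ)
            then (((a - 1 + ((p : ℕ) - (q : ℕ))).choose ((p : ℕ) - (q : ℕ)) : ℝ) •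
              ((-(!![(0 : ℝ), 1; -1, 0])) ^ (a + ((p : ℕ) - (q : ℕ))))) u v
            else 0 := by
    intro a ha p q u v
    rw [hpow a ha]
    show Ff a (2*(p:ℕ)+(u:ℕ)) (2*(q:ℕ)+(v:ℕ)) = _
    unfold Ff
    rw [show (2*(p:ℕ)+(u:ℕ))/2 = (p:ℕ) by have := u.2; omega,
        show (2*(p:ℕ)+(u:ℕ))%2 = (u:ℕ) by have := u.2; omega,
        show (2*(q:ℕ)+(v:ℕ))/2 = (q:ℕ) by have := v.2; omega,
        show (2*(q:ℕ)+(v:ℕ))%2 = (v:ℕ) by have := v.2; omega]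
    by_cases hqp : (q:ℕ) ≤ (p:ℕ)
    · rw [if_pos hqp, if_pos hqp, Matrix.smul_apply, smul_eq_mul]
      congr 1
      exact (Pm_eq (a + ((p:ℕ) - (q:ℕ))) (u:ℕ) u.2 (v:ℕ) v.2).symm
    · rw [if_neg hqp, if_neg hqp]
  refine ⟨main, ?_⟩
  intro p q u v
  have h2 := main 1 le_rfl p q u v
  rw [pow_one] at h2
  rw [h2]
  by_cases hqp : (q:ℕ) ≤ (p:ℕ)
  · rw [if_pos hqp, if_pos hqp, Matrix.smul_apply, smul_eq_mul]
    norm_num [Nat.choose_self]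
  · rw [if_neg hqp, if_neg hqp]
end
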